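/- arXiv:1811.05444 — 10 statements merged into one kernel-verified Lean document; each statement's English description precedes it below -/
import Mathlib

section
/- Let T be a complete first-order theory and φ(x̄,ȳ) a formula of T. Define θ(x̄,ȳ₀ȳ₁) := φ(x̄,ȳ₀) ∧ ¬φ(x̄,ȳ₁). Then the following are equivalent: θ(x̄,ȳ₀ȳ₁) admits Δ(IP); θ(x̄,ȳ₀ȳ₁) has the independence property; φ(x̄,ȳ) has the independence property. Consequently, T has the independence property (some formula of T has IP) if and only if T admits Δ(IP). -/
open FirstOrder

universe u v x w

/-- Δ' on J is an instance of Δ on I. -/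
def IsInstanceOf {J : Type*} {I : Type*} (Δ' : Set (Finset J)) (Δ : Set (Finset I)) : Prop :=
  ∀ s : Finset J, ∃ f : J → I, ∀ t ⊆ s,
    (t ∈ Δ' ↔ (letI := Classical.decEq I; t.image f) ∈ Δ)

/-- The pattern Δ(IP) on ω × 2: finite sets containing no pair (n,0), (n,1). -/
def deltaIP : Set (Finset (ℕ × Fin 2)) :=
  {s | ∀ n : ℕ, ¬((n, 0) ∈ s ∧ (n, 1) ∈ s)}

/-- φ(x̄,ȳ) admits Δ (relative to T). -/
def AdmitsVia {L : FirstOrder.Language.{u, v}} (T : L.Theory) {m n : ℕ}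
    (φ : L.Formula (Fin m ⊕ Fin n)) {I : Type x} (Δ : Set (Finset I)) : Prop :=
  ∃ (M : FirstOrder.Language.Theory.ModelType.{u, v, w} T) (a : I → Fin n → M),
    ∀ s : Finset I, (∃ xx : Fin m → M, ∀ i ∈ s, φ.Realize (Sum.elim xx (a i))) ↔ s ∈ Δ

/-- T admits Δ: some formula of T admits Δ. -/
def Admits {L : FirstOrder.Language.{u, v}} (T : L.Theory) {I : Type x} (Δ : Set (Finset I)) :
    Prop :=
  ∃ (m n : ℕ) (φ : L.Formula (Fin m ⊕ Fin n)), AdmitsVia.{u, v, x, w} T φ Δ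

/-- φ(x̄,ȳ) has the independence property (relative to T). -/
def HasIP {L : FirstOrder.Language.{u, v}} (T : L.Theory) {m n : ℕ}
    (φ : L.Formula (Fin m ⊕ Fin n)) : Prop :=
  ∃ (M : FirstOrder.Language.Theory.ModelType.{u, v, w} T) (b : ℕ → Fin n → M),
    ∀ uu vv : Finset ℕ, Disjoint uu vv →
      ∃ xx : Fin m → M, (∀ k ∈ uu, φ.Realize (Sum.elim xx (b k))) ∧
        (∀ k ∈ vv, ¬ φ.Realize (Sum.elim xx (b k)))

/-- θ(x̄, ȳ₀ȳ₁) := φ(x̄,ȳ₀) ∧ ¬φ(x̄,ȳ₁), as a formula in free variables Fin m ⊕ Fin (n + n). -/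
def ipPair {L : FirstOrder.Language.{u, v}} {m n : ℕ} (φ : L.Formula (Fin m ⊕ Fin n)) :
    L.Formula (Fin m ⊕ Fin (n + n)) :=
  (φ.relabel (Sum.map id (Fin.castAdd n))) ⊓ (φ.relabel (Sum.map id (Fin.natAdd n))).not

section Helpers

open FirstOrder.Language

variable {L : FirstOrder.Language.{u, v}} {T : L.Theory} {m n : ℕ}

lemma realize_ipPair {M : Type*} [L.Structure M] (φ : L.Formula (Fin m ⊕ Fin n))
    (xx : Fin m → M) (c : Fin (n + n) → M) :
    (ipPair φ).Realize (Sum.elim xx c) ↔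
      (φ.Realize (Sum.elim xx (c ∘ Fin.castAdd n)) ∧
       ¬ φ.Realize (Sum.elim xx (c ∘ Fin.natAdd n))) := by
  rw [ipPair, Formula.realize_inf, Formula.realize_not, Formula.realize_relabel,
    Formula.realize_relabel, Sum.elim_comp_map, Sum.elim_comp_map, Function.comp_id]

/-- glue two n-tuples into an (n+n)-tuple -/
def glue {M : Type*} {n : ℕ} (a b : Fin n → M) : Fin (n + n) → M :=
  fun i => Sum.elim a b (finSumFinEquiv.symm i)

lemma glue_castAdd {M : Type*} {n : ℕ} (a b : Fin n → M) :
    glue a b ∘ Fin.castAdd n = a := by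
  funext i; simp [glue]

/-- Easy direction: any formula admitting Δ(IP) has IP. -/
lemma hasIP_of_admitsVia (ψ : L.Formula (Fin m ⊕ Fin n))
    (h : AdmitsVia.{u, v, 0, w} T ψ deltaIP) : HasIP.{u, v, w} T ψ := by
  classical
  obtain ⟨M, a, ha⟩ := h
  refine ⟨M, fun k => a (k, 0), fun uu vv huv => ?_⟩
  set s : Finset (ℕ × Fin 2) :=
    uu.image (fun k => (k, (0 : Fin 2))) ∪ vv.image (fun k => (k, (1 : Fin 2))) with hs_def
  have hs : s ∈ deltaIP := by
    intro k hk
    obtain ⟨h0, h1⟩ := hk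
    have h0' : k ∈ uu := by
      simp only [hs_def, Finset.mem_union, Finset.mem_image, Prod.mk.injEq] at h0
      rcases h0 with ⟨j, hj, rfl, _⟩ | ⟨j, hj, rfl, hcon⟩
      · exact hj
      · exact absurd hcon.symm (by decide)
    have h1' : k ∈ vv := by
      simp only [hs_def, Finset.mem_union, Finset.mem_image, Prod.mk.injEq] at h1
      rcases h1 with ⟨j, hj, rfl, hcon⟩ | ⟨j, hj, rfl, _⟩
      · exact absurd hcon (by decide)
      · exact hj
    exact (Finset.disjoint_left.1 huv) h0' h1'
  obtain ⟨xx, hx⟩ := (ha s).mpr hs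
  refine ⟨xx, fun k hk => hx _ ?_, fun k hk hreal => ?_⟩
  · simp only [hs_def, Finset.mem_union, Finset.mem_image]
    exact Or.inl ⟨k, hk, rfl⟩
  · have h1 : ψ.Realize (Sum.elim xx (a (k, 1))) := by
      refine hx _ ?_
      simp only [hs_def, Finset.mem_union, Finset.mem_image]
      exact Or.inr ⟨k, hk, rfl⟩
    have hmem : ({(k, (0 : Fin 2)), (k, (1 : Fin 2))} : Finset (ℕ × Fin 2)) ∈ deltaIP := by
      refine (ha _).mp ⟨xx, fun i hi => ?_⟩
      simp only [Finset.mem_insert, Finset.mem_singleton] at hi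
      rcases hi with rfl | rfl
      · exact hreal
      · exact h1
    exact hmem k (by simp)

lemma glue_natAdd {M : Type*} {n : ℕ} (a b : Fin n → M) :
    glue a b ∘ Fin.natAdd n = b := by
  funext i
  show Sum.elim a b (finSumFinEquiv.symm (Fin.natAdd n i)) = b i
  rw [finSumFinEquiv_symm_apply_natAdd]
  rfl

/-- the parameter assignment used to show `ipPair φ` admits Δ(IP) -/
def aMap {M : Type*} {n : ℕ} (b : ℕ → Fin n → M) (p : ℕ × Fin 2) : Fin (n + n) → M :=
  if p.2 = 0 then glue (b (2 * p.1)) (b (2 * p.1 + 1)) else glue (b (2 * p.1 + 1)) (b (2 * p.1))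

lemma aMap_zero {M : Type*} {n : ℕ} (b : ℕ → Fin n → M) (k : ℕ) :
    aMap b (k, 0) = glue (b (2 * k)) (b (2 * k + 1)) := if_pos rfl

lemma aMap_one {M : Type*} {n : ℕ} (b : ℕ → Fin n → M) (k : ℕ) :
    aMap b (k, 1) = glue (b (2 * k + 1)) (b (2 * k)) := by simp [aMap]

lemma fin_two_cases (ε : Fin 2) : ε = 0 ∨ ε = 1 := by
  rcases ε with ⟨v, hv⟩
  interval_cases v
  · exact Or.inl rfl
  · exact Or.inr rfl

/-- Easy direction: if φ has IP then ipPair φ admits Δ(IP). -/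
lemma admitsVia_of_hasIP (φ : L.Formula (Fin m ⊕ Fin n))
    (h : HasIP.{u, v, w} T φ) : AdmitsVia.{u, v, 0, w} T (ipPair φ) deltaIP := by
  classical
  obtain ⟨M, b, hb⟩ := h
  refine ⟨M, aMap b, fun s => ?_⟩
  constructor
  · rintro ⟨xx, hx⟩ k ⟨h0, h1⟩
    have r0 := hx _ h0
    have r1 := hx _ h1
    rw [aMap_zero, realize_ipPair, glue_castAdd, glue_natAdd] at r0
    rw [aMap_one, realize_ipPair, glue_castAdd, glue_natAdd] at r1
    exact r1.2 r0.1
  · intro hs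
    set uu : Finset ℕ := (s.filter (fun p => p.2 = 0)).image (fun p => 2 * p.1) ∪
              (s.filter (fun p => p.2 = 1)).image (fun p => 2 * p.1 + 1) with huu_def
    set vv : Finset ℕ := (s.filter (fun p => p.2 = 0)).image (fun p => 2 * p.1 + 1) ∪
              (s.filter (fun p => p.2 = 1)).image (fun p => 2 * p.1) with hvv_def
    have hdisj : Disjoint uu vv := by
      rw [Finset.disjoint_left]
      intro j hj hj'
      simp only [huu_def, hvv_def, Finset.mem_union, Finset.mem_image, Finset.mem_filter] at hj hj'
      rcases hj with ⟨⟨a1, a2⟩, ⟨ha, rfl⟩, rfl⟩ | ⟨⟨a1, a2⟩, ⟨ha, rfl⟩, hva⟩ <;>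
        rcases hj' with ⟨⟨c1, c2⟩, ⟨hc, rfl⟩, hvc⟩ | ⟨⟨c1, c2⟩, ⟨hc, rfl⟩, hvc⟩
      · omega
      · have : a1 = c1 := by omega
        subst this
        exact hs a1 ⟨ha, hc⟩
      · have : a1 = c1 := by omega
        subst this
        exact hs a1 ⟨hc, ha⟩
      · omega
    obtain ⟨xx, hx1, hx2⟩ := hb uu vv hdisj
    refine ⟨xx, fun p hp => ?_⟩
    obtain ⟨k, ε⟩ := p
    rcases fin_two_cases ε with rfl | rfl
    · rw [aMap_zero, realize_ipPair, glue_castAdd, glue_natAdd]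
      constructor
      · refine hx1 _ ?_
        simp only [huu_def, Finset.mem_union, Finset.mem_image, Finset.mem_filter]
        exact Or.inl ⟨(k, 0), ⟨hp, rfl⟩, rfl⟩
      · refine hx2 _ ?_
        simp only [hvv_def, Finset.mem_union, Finset.mem_image, Finset.mem_filter]
        exact Or.inl ⟨(k, 0), ⟨hp, rfl⟩, rfl⟩
    · rw [aMap_one, realize_ipPair, glue_castAdd, glue_natAdd]
      constructor
      · refine hx1 _ ?_
        simp only [huu_def, Finset.mem_union, Finset.mem_image, Finset.mem_filter]
        exact Or.inr ⟨(k, 1), ⟨hp, rfl⟩, rfl⟩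
      · refine hx2 _ ?_
        simp only [hvv_def, Finset.mem_union, Finset.mem_image, Finset.mem_filter]
        exact Or.inr ⟨(k, 1), ⟨hp, rfl⟩, rfl⟩

private lemma exists_pow_lt' (K : ℕ) (hK : 1 ≤ K) : ∃ N, 0 < N ∧ (N + 1) ^ K < 2 ^ N := by
  refine ⟨K * 2 ^ (K + 1), by positivity, ?_⟩
  have hKpow : K + 1 ≤ 2 ^ K := Nat.lt_two_pow_self (n := K)
  have h2 : 2 * K + 1 < 2 ^ (K + 1) := by
    have : 2 * (K + 1) ≤ 2 * 2 ^ K := by omega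
    rw [pow_succ]
    omega
  have h1 : K * 2 ^ (K + 1) + 1 < 2 ^ (2 ^ (K + 1)) := by
    calc K * 2 ^ (K + 1) + 1 ≤ (K + 1) * 2 ^ (K + 1) := by
          have : 1 ≤ 2 ^ (K + 1) := Nat.one_le_two_pow
          nlinarith
      _ ≤ 2 ^ K * 2 ^ (K + 1) := by
          exact Nat.mul_le_mul_right _ hKpow
      _ = 2 ^ (2 * K + 1) := by rw [← pow_add]; ring_nf
      _ < 2 ^ (2 ^ (K + 1)) := Nat.pow_lt_pow_right (by norm_num) h2
  calc (K * 2 ^ (K + 1) + 1) ^ K < (2 ^ (2 ^ (K + 1))) ^ K :=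
        Nat.pow_lt_pow_left h1 (by omega)
    _ = 2 ^ (2 ^ (K + 1) * K) := by rw [← pow_mul]
    _ = 2 ^ (K * 2 ^ (K + 1)) := by rw [mul_comm]

private lemma sum_pow_le (x D : ℕ) (hx : 2 ≤ x) :
    ∑ i ∈ Finset.range D, x ^ i ≤ x ^ D := by
  induction D with
  | zero => simp
  | succ D ih =>
    rw [Finset.sum_range_succ, pow_succ]
    have h1 : 1 ≤ x ^ D := Nat.one_le_pow _ _ (by omega)
    nlinarith

private lemma card_filter_card_lt (N D : ℕ) (hN : 1 ≤ N) :
    (Finset.univ.filter (fun S : Finset (Fin N) => S.card < D)).card ≤ (N + 1) ^ D := by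
  classical
  have hsub : Finset.univ.filter (fun S : Finset (Fin N) => S.card < D) ⊆
      (Finset.range D).biUnion (fun i => Finset.powersetCard i (Finset.univ : Finset (Fin N))) := by
    intro S hS
    simp only [Finset.mem_filter, Finset.mem_biUnion, Finset.mem_range,
      Finset.mem_powersetCard] at *
    exact ⟨S.card, hS.2, Finset.subset_univ S, rfl⟩
  calc (Finset.univ.filter (fun S : Finset (Fin N) => S.card < D)).card
      ≤ ((Finset.range D).biUnion
          (fun i => Finset.powersetCard i (Finset.univ : Finset (Fin N)))).card :=
        Finset.card_le_card hsub
    _ ≤ ∑ i ∈ Finset.range D,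
          (Finset.powersetCard i (Finset.univ : Finset (Fin N))).card :=
        Finset.card_biUnion_le
    _ ≤ ∑ i ∈ Finset.range D, (N + 1) ^ i := by
        refine Finset.sum_le_sum fun i _ => ?_
        rw [Finset.card_powersetCard, Finset.card_univ, Fintype.card_fin]
        calc N.choose i ≤ N ^ i := Nat.choose_le_pow N i
          _ ≤ (N + 1) ^ i := Nat.pow_le_pow_left (by omega) i
    _ ≤ (N + 1) ^ D := sum_pow_le (N + 1) D (by omega)

private lemma exists_shattered {N D : ℕ} (hN : 1 ≤ N) (A : Finset (Finset (Fin N)))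
    (hA : (N + 1) ^ D < A.card) : ∃ S : Finset (Fin N), A.Shatters S ∧ S.card = D := by
  classical
  have h1 : (N + 1) ^ D < A.shatterer.card :=
    lt_of_lt_of_le hA (Finset.card_le_card_shatterer A)
  have h2 : ¬ A.shatterer ⊆ Finset.univ.filter (fun S : Finset (Fin N) => S.card < D) := by
    intro hsub
    have := Finset.card_le_card hsub
    have := card_filter_card_lt N D hN
    omega
  obtain ⟨S, hS, hSc⟩ := Finset.not_subset.1 h2
  have hcard : D ≤ S.card := by
    by_contra hlt
    exact hSc (Finset.mem_filter.2 ⟨Finset.mem_univ _, by omega⟩)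
  obtain ⟨S', hS'sub, hS'card⟩ := Finset.exists_subset_card_eq hcard
  exact ⟨S', (Finset.mem_shatterer.1 hS).mono_right hS'sub, hS'card⟩

/-- From a large family of realized φ-patterns, extract a φ-shattered tuple of length D. -/
private lemma shattered_of_large_family {M : Type*} [L.Structure M]
    (φ : L.Formula (Fin m ⊕ Fin n)) {N D : ℕ}
    (hN : 1 ≤ N) (f : Fin N → Fin n → M) (A : Finset (Finset (Fin N)))
    (hmem : ∀ S ∈ A, ∃ x : Fin m → M, ∀ k, (φ.Realize (Sum.elim x (f k)) ↔ k ∈ S))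
    (hA : (N + 1) ^ D < A.card) :
    ∃ e : Fin D → Fin n → M, ∀ U : Finset (Fin D), ∃ x : Fin m → M,
      ∀ j, (φ.Realize (Sum.elim x (e j)) ↔ j ∈ U) := by
  classical
  obtain ⟨S, hSsh, hScard⟩ := exists_shattered hN _ hA
  refine ⟨fun j => f (S.orderIsoOfFin hScard j), fun U => ?_⟩
  have hsub : (U.image fun j => ((S.orderIsoOfFin hScard j : { x // x ∈ S }) : Fin N)) ⊆ S := by
    intro k hk
    obtain ⟨j, _, rfl⟩ := Finset.mem_image.1 hk
    exact (S.orderIsoOfFin hScard j).2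
  obtain ⟨P, hP, hPint⟩ := hSsh hsub
  obtain ⟨x, hx⟩ := hmem P hP
  refine ⟨x, fun j => (hx _).trans ?_⟩
  constructor
  · intro hmem'
    have hin : ((S.orderIsoOfFin hScard j : { x // x ∈ S }) : Fin N) ∈ S ∩ P :=
      Finset.mem_inter.2 ⟨(S.orderIsoOfFin hScard j).2, hmem'⟩
    rw [hPint] at hin
    obtain ⟨j', hj', heq⟩ := Finset.mem_image.1 hin
    have : j' = j := (S.orderIsoOfFin hScard).injective (Subtype.coe_injective heq)
    exact this ▸ hj'
  · intro hU
    have hin : ((S.orderIsoOfFin hScard j : { x // x ∈ S }) : Fin N) ∈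
        U.image fun j => ((S.orderIsoOfFin hScard j : { x // x ∈ S }) : Fin N) :=
      Finset.mem_image_of_mem _ hU
    rw [← hPint] at hin
    exact (Finset.mem_inter.1 hin).2

/-- Finite step: from IP witnesses for `ipPair φ`, get arbitrarily large φ-shattered tuples. -/
private lemma exists_shattered_in_model {M : Type w} [L.Structure M] [Nonempty M]
    (φ : L.Formula (Fin m ⊕ Fin n)) (b : ℕ → Fin (n + n) → M)
    (hb : ∀ uu vv : Finset ℕ, Disjoint uu vv →
      ∃ x : Fin m → M, (∀ k ∈ uu, (ipPair φ).Realize (Sum.elim x (b k))) ∧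
        (∀ k ∈ vv, ¬ (ipPair φ).Realize (Sum.elim x (b k))))
    (D : ℕ) :
    ∃ e : Fin D → Fin n → M, ∀ U : Finset (Fin D), ∃ x : Fin m → M,
      ∀ j, (φ.Realize (Sum.elim x (e j)) ↔ j ∈ U) := by
  classical
  obtain ⟨N, hN, hNpow⟩ := exists_pow_lt' (2 * D + 1) (by omega)
  set cc : Fin N → Fin n → M := fun k => b k ∘ Fin.castAdd n with hcc
  set dd : Fin N → Fin n → M := fun k => b k ∘ Fin.natAdd n with hdd
  set A : Finset (Finset (Fin N)) := Finset.univ.filter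
    (fun S : Finset (Fin N) => ∃ x : Fin m → M,
      ∀ k, (φ.Realize (Sum.elim x (cc k)) ↔ k ∈ S)) with hA_def
  set B : Finset (Finset (Fin N)) := Finset.univ.filter
    (fun S : Finset (Fin N) => ∃ x : Fin m → M,
      ∀ k, (φ.Realize (Sum.elim x (dd k)) ↔ k ∈ S)) with hB_def
  have key : 2 ^ N ≤ A.card * B.card := by
    have hG : ∀ S : Finset (Fin N), ∃ x : Fin m → M,
        (∀ k : Fin N, k ∈ S → (ipPair φ).Realize (Sum.elim x (b k))) ∧
        (∀ k : Fin N, k ∉ S → ¬ (ipPair φ).Realize (Sum.elim x (b k))) := by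
      intro S
      have hdisj : Disjoint (S.image Fin.val) ((Finset.univ \ S).image Fin.val) :=
        (Finset.disjoint_image Fin.val_injective).2 Finset.disjoint_sdiff
      obtain ⟨x, hx1, hx2⟩ := hb _ _ hdisj
      refine ⟨x, fun k hk => ?_, fun k hk => ?_⟩
      · have := hx1 (k : ℕ) (Finset.mem_image_of_mem _ hk)
        simpa using this
      · have := hx2 (k : ℕ) (Finset.mem_image_of_mem _
          (Finset.mem_sdiff.2 ⟨Finset.mem_univ _, hk⟩))
        simpa using this
    choose g hg1 hg2 using hG
    set G : Finset (Fin N) → Finset (Fin N) × Finset (Fin N) :=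
      fun S => (Finset.univ.filter (fun k => φ.Realize (Sum.elim (g S) (cc k))),
                Finset.univ.filter (fun k => φ.Realize (Sum.elim (g S) (dd k)))) with hG_def
    have hGmem : ∀ S, G S ∈ A ×ˢ B := by
      intro S
      refine Finset.mem_product.2 ⟨?_, ?_⟩
      · refine Finset.mem_filter.2 ⟨Finset.mem_univ _, ⟨g S, fun k => ?_⟩⟩
        simp [hG_def]
      · refine Finset.mem_filter.2 ⟨Finset.mem_univ _, ⟨g S, fun k => ?_⟩⟩
        simp [hG_def]
    have hrecover : ∀ S : Finset (Fin N), (G S).1 \ (G S).2 = S := by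
      intro S
      ext k
      simp only [hG_def, Finset.mem_sdiff, Finset.mem_filter, Finset.mem_univ, true_and]
      constructor
      · rintro ⟨h1, h2⟩
        by_contra hk
        have hneg := hg2 S k hk
        rw [realize_ipPair] at hneg
        exact hneg ⟨h1, h2⟩
      · intro hk
        have hpos := hg1 S k hk
        rw [realize_ipPair] at hpos
        exact hpos
    have hGinj : Function.Injective G := by
      intro S S' hSS'
      rw [← hrecover S, ← hrecover S', hSS']
    calc 2 ^ N = Fintype.card (Finset (Fin N)) := by simp
      _ = (Finset.univ : Finset (Finset (Fin N))).card := Finset.card_univ.symm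
      _ ≤ (A ×ˢ B).card :=
          Finset.card_le_card_of_injOn G (fun S _ => hGmem S) hGinj.injOn
      _ = A.card * B.card := Finset.card_product A B
  have hbig : (N + 1) ^ D < A.card ∨ (N + 1) ^ D < B.card := by
    by_contra hcon
    push_neg at hcon
    have h1 : 2 ^ N ≤ (N + 1) ^ D * (N + 1) ^ D :=
      le_trans key (Nat.mul_le_mul hcon.1 hcon.2)
    rw [← pow_add] at h1
    have h2 : (N + 1) ^ (D + D) ≤ (N + 1) ^ (2 * D + 1) :=
      Nat.pow_le_pow_right (by omega) (by omega)
    omega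
  rcases hbig with h | h
  · exact shattered_of_large_family φ hN cc A (fun S hS => (Finset.mem_filter.1 hS).2) h
  · exact shattered_of_large_family φ hN dd B (fun S hS => (Finset.mem_filter.1 hS).2) h

/-- Ultraproduct step: from arbitrarily large φ-shattered tuples in a model of T, get HasIP. -/
private lemma hasIP_of_shattered (Mdl : Language.Theory.ModelType.{u, v, w} T)
    (φ : L.Formula (Fin m ⊕ Fin n))
    (h : ∀ D : ℕ, ∃ e : Fin D → Fin n → Mdl, ∀ U : Finset (Fin D), ∃ x : Fin m → Mdl,
      ∀ j, (φ.Realize (Sum.elim x (e j)) ↔ j ∈ U)) :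
    HasIP.{u, v, w} T φ := by
  classical
  choose E hE using h
  let Uf : Ultrafilter ℕ := Filter.hyperfilter ℕ
  letI St : Setoid (∀ _ : ℕ, (Mdl : Type w)) :=
    (Uf : Filter ℕ).productSetoid (fun _ : ℕ => (Mdl : Type w))
  let Prd : Type w := (Uf : Filter ℕ).Product (fun _ : ℕ => (Mdl : Type w))
  haveI : Nonempty Prd := inferInstanceAs (Nonempty ((Uf : Filter ℕ).Product _))
  haveI hPmod : Prd ⊨ T := by
    rw [Language.Theory.model_iff]
    intro σ hσ
    exact (Language.Ultraproduct.sentence_realize (u := Uf) σ).2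
      (Filter.Eventually.of_forall fun j => Mdl.is_model.realize_of_mem σ hσ)
  let erep : ℕ → ℕ → Fin n → Mdl := fun k j =>
    if hkj : k < j then E j ⟨k, hkj⟩ else fun _ => Classical.arbitrary Mdl
  refine ⟨Language.Theory.ModelType.of T Prd,
    fun k i => (Quotient.mk' (fun j => erep k j i) : Prd), fun uu vv huv => ?_⟩
  have hx : ∀ j : ℕ, ∃ x : Fin m → Mdl, ∀ (k : ℕ) (hk : k < j),
      (φ.Realize (Sum.elim x (E j ⟨k, hk⟩)) ↔ k ∈ uu) := by
    intro j
    obtain ⟨x, hxj⟩ := hE j (Finset.univ.filter fun k : Fin j => (k : ℕ) ∈ uu)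
    refine ⟨x, fun k hk => (hxj ⟨k, hk⟩).trans ?_⟩
    simp
  choose xf hxf using hx
  have hev : ∀ k : ℕ, ∀ᶠ j in (Uf : Filter ℕ), k < j := by
    intro k
    have hfin : {j : ℕ | ¬ k < j}.Finite :=
      Set.Finite.subset (Set.finite_Iic k) (fun j hj => by
        simp only [Set.mem_setOf_eq, not_lt] at hj
        exact hj)
    have hmem := Filter.compl_mem_hyperfilter_of_finite hfin
    rw [Filter.eventually_iff]
    convert hmem using 1
    exact Iff.of_eq (congrArg (· ∈ (Uf : Filter ℕ)) (by ext j; simp))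
  have main : ∀ k : ℕ,
      (φ.Realize (Sum.elim (fun i => (Quotient.mk' (fun j => xf j i) : Prd))
        (fun i => (Quotient.mk' (fun j => erep k j i) : Prd))) ↔
      ∀ᶠ j in (Uf : Filter ℕ), φ.Realize (Sum.elim (xf j) (erep k j))) := by
    intro k
    have hcast := Language.Ultraproduct.realize_formula_cast (u := Uf)
      (M := fun _ : ℕ => (Mdl : Type w)) φ
      (fun s j => Sum.elim (xf j) (erep k j) s)
    have hfun : (Sum.elim (fun i => (Quotient.mk' (fun j => xf j i) : Prd))
        (fun i => (Quotient.mk' (fun j => erep k j i) : Prd))) =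
        (fun s => (Quotient.mk' (fun j => Sum.elim (xf j) (erep k j) s) : Prd)) := by
      funext s
      cases s <;> rfl
    rw [hfun]
    exact hcast
  refine ⟨fun i => (Quotient.mk' (fun j => xf j i) : Prd), fun k hk => ?_, fun k hk => ?_⟩
  · refine (main k).2 ?_
    refine (hev k).mono fun j hj => ?_
    have herep : erep k j = E j ⟨k, hj⟩ := dif_pos hj
    rw [herep]
    exact (hxf j k hj).2 hk
  · refine mt (main k).1 ?_
    intro hcon
    have hneg : ∀ᶠ j in (Uf : Filter ℕ), ¬ φ.Realize (Sum.elim (xf j) (erep k j)) := by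
      refine (hev k).mono fun j hj hreal => ?_
      have herep : erep k j = E j ⟨k, hj⟩ := dif_pos hj
      rw [herep] at hreal
      exact (Finset.disjoint_left.1 huv) ((hxf j k hj).1 hreal) hk
    obtain ⟨j, hj1, hj2⟩ := (hcon.and hneg).exists
    exact hj2 hj1

/-- HasIP for ipPair implies HasIP for φ (the hard direction). -/
private lemma hasIP_of_hasIP_ipPair (φ : L.Formula (Fin m ⊕ Fin n))
    (h : HasIP.{u, v, w} T (ipPair φ)) : HasIP.{u, v, w} T φ := by
  obtain ⟨M, b, hb⟩ := h
  exact hasIP_of_shattered M φ (fun D => exists_shattered_in_model φ b hb D)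

end Helpers

theorem statement2 {L : FirstOrder.Language.{u, v}} (T : L.Theory) (hT : T.IsComplete)
    {m n : ℕ} (φ : L.Formula (Fin m ⊕ Fin n)) :
    (AdmitsVia.{u, v, 0, w} T (ipPair φ) deltaIP ↔ HasIP.{u, v, w} T (ipPair φ)) ∧
    (HasIP.{u, v, w} T (ipPair φ) ↔ HasIP.{u, v, w} T φ) ∧
    ((∃ (m' n' : ℕ) (ψ : L.Formula (Fin m' ⊕ Fin n')), HasIP.{u, v, w} T ψ) ↔
      Admits.{u, v, 0, w} T deltaIP) := by
  refine ⟨⟨fun h => hasIP_of_admitsVia _ h,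
      fun h => admitsVia_of_hasIP φ (hasIP_of_hasIP_ipPair φ h)⟩,
    ⟨fun h => hasIP_of_hasIP_ipPair φ h,
      fun h => hasIP_of_admitsVia _ (admitsVia_of_hasIP φ h)⟩, ?_, ?_⟩
  · rintro ⟨m', n', ψ, hψ⟩
    exact ⟨m', n' + n', ipPair ψ, admitsVia_of_hasIP ψ hψ⟩
  · rintro ⟨m', n', ψ, hψ⟩
    exact ⟨m', n', ψ, hasIP_of_admitsVia ψ hψ⟩
end

section
/- Let T be a complete first-order theory and φ(x̄,ȳ) a formula of T. Then φ(x̄,ȳ) has the tree property of the second kind (TP₂) if and only if φ(x̄,ȳ) admits Δ(TP₂). Consequently, T has TP₂ (some formula of T has TP₂) if and only if T admits Δ(TP₂). -/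
open FirstOrder

universe u v x w

/-- The pattern Δ(TP₂) on ω × ω: finite graphs of partial functions from ω to ω. -/
def deltaTP2 : Set (Finset (ℕ × ℕ)) :=
  {s | ∀ n m m' : ℕ, (n, m) ∈ s → (n, m') ∈ s → m = m'}

/-- φ(x̄,ȳ) has the tree property of the second kind (relative to T). -/
def HasTP2 {L : FirstOrder.Language.{u, v}} (T : L.Theory) {m n : ℕ}
    (φ : L.Formula (Fin m ⊕ Fin n)) : Prop :=
  ∃ (M : FirstOrder.Language.Theory.ModelType.{u, v, w} T) (b : ℕ → ℕ → Fin n → M),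
    (∀ (k : ℕ) (j j' : ℕ), j < j' →
      ¬ ∃ xx : Fin m → M, φ.Realize (Sum.elim xx (b k j)) ∧ φ.Realize (Sum.elim xx (b k j'))) ∧
    (∀ (η : ℕ → ℕ) (uu : Finset ℕ), ∃ xx : Fin m → M,
      ∀ k ∈ uu, φ.Realize (Sum.elim xx (b k (η k))))

theorem tp2_iff_aux {L : FirstOrder.Language.{u, v}} (T : L.Theory)
    {m n : ℕ} (φ : L.Formula (Fin m ⊕ Fin n)) :
    HasTP2.{u, v, w} T φ ↔ AdmitsVia.{u, v, 0, w} T φ deltaTP2 := by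
  classical
  constructor
  · rintro ⟨M, b, hrow, hcons⟩
    refine ⟨M, fun p => b p.1 p.2, fun s => ?_⟩
    constructor
    · rintro ⟨xx, hxx⟩ k j j' h1 h2
      by_contra hne
      rcases Nat.lt_or_ge j j' with h | h
      · exact hrow k j j' h ⟨xx, hxx _ h1, hxx _ h2⟩
      · have hlt : j' < j := lt_of_le_of_ne h (fun e => hne e.symm)
        exact hrow k j' j hlt ⟨xx, hxx _ h2, hxx _ h1⟩
    · intro hs
      set η : ℕ → ℕ := fun k => if h : ∃ j, (k, j) ∈ s then h.choose else 0 with hηdef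
      obtain ⟨xx, hxx⟩ := hcons η (s.image Prod.fst)
      refine ⟨xx, ?_⟩
      rintro ⟨pk, pj⟩ hp
      have hη : η pk = pj := by
        have h : ∃ j, (pk, j) ∈ s := ⟨pj, hp⟩
        simp only [hηdef, dif_pos h]
        exact hs pk h.choose pj h.choose_spec hp
      have := hxx pk (Finset.mem_image.mpr ⟨(pk, pj), hp, rfl⟩)
      rw [hη] at this
      exact this
  · rintro ⟨M, a, ha⟩
    refine ⟨M, fun k j => a (k, j), ?_, ?_⟩
    · rintro k j j' hlt ⟨xx, h1, h2⟩
      have hmem : ({(k, j), (k, j')} : Finset (ℕ × ℕ)) ∈ deltaTP2 := by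
        refine (ha _).mp ⟨xx, ?_⟩
        intro i hi
        rcases Finset.mem_insert.mp hi with h | h
        · subst h; exact h1
        · rw [Finset.mem_singleton.mp h]; exact h2
      have : j = j' := hmem k j j' (by simp) (by simp)
      exact absurd this hlt.ne
    · intro η uu
      have hmem : (uu.image (fun k => (k, η k))) ∈ deltaTP2 := by
        intro k j j' h1 h2
        obtain ⟨k1, hk1, he1⟩ := Finset.mem_image.mp h1
        obtain ⟨k2, hk2, he2⟩ := Finset.mem_image.mp h2
        have e1 : k1 = k := congrArg Prod.fst he1
        have e2 : k2 = k := congrArg Prod.fst he2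
        have f1 : η k1 = j := congrArg Prod.snd he1
        have f2 : η k2 = j' := congrArg Prod.snd he2
        rw [← f1, ← f2, e1, e2]
      obtain ⟨xx, hxx⟩ := (ha _).mpr hmem
      exact ⟨xx, fun k hk => hxx (k, η k) (Finset.mem_image_of_mem _ hk)⟩

theorem statement3 {L : FirstOrder.Language.{u, v}} (T : L.Theory) (hT : T.IsComplete)
    {m n : ℕ} (φ : L.Formula (Fin m ⊕ Fin n)) :
    (HasTP2.{u, v, w} T φ ↔ AdmitsVia.{u, v, 0, w} T φ deltaTP2) ∧
    ((∃ (m' n' : ℕ) (ψ : L.Formula (Fin m' ⊕ Fin n')), HasTP2.{u, v, w} T ψ) ↔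
      Admits.{u, v, 0, w} T deltaTP2) := by
  refine ⟨tp2_iff_aux T φ, ?_, ?_⟩
  · rintro ⟨m', n', ψ, h⟩
    exact ⟨m', n', ψ, (tp2_iff_aux T ψ).mp h⟩
  · rintro ⟨m', n', ψ, h⟩
    exact ⟨m', n', ψ, (tp2_iff_aux T ψ).mpr h⟩
end

section
/- Let T be a complete first-order theory and φ(x̄,ȳ) a formula of T. Then φ(x̄,ȳ) has the finite dividing property if and only if there exist an infinite set I ⊆ ω∖{0} and a pattern Δ on I × ω with Δ_I(FDP) ⊆ Δ ⊆ Δ*_I(FDP) such that φ(x̄,ȳ) admits Δ. Hence T has the finite dividing property (some formula of T does) if and only if T admits some such pattern Δ. -/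
open FirstOrder

universe u v x w

/-- Δ is a pattern on I: a set of finite subsets of I closed under subsets. -/
def IsPattern {I : Type x} (Δ : Set (Finset I)) : Prop :=
  ∀ ⦃s t : Finset I⦄, t ⊆ s → s ∈ Δ → t ∈ Δ

/-- The pattern Δ_I(FDP) on I × ω: finite sets s such that for some m ∈ I,
s ⊆ {m} × ω and |s| ≤ m. -/
def deltaFDP (I : Set ℕ) : Set (Finset (I × ℕ)) :=
  {s | ∃ m : I, (∀ p ∈ s, p.1 = m) ∧ s.card ≤ (m : ℕ)}

/-- The pattern Δ*_I(FDP) on I × ω: finite sets s with |s ∩ {m} × ω| ≤ m for all m ∈ I. -/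
def deltaFDPstar (I : Set ℕ) : Set (Finset (I × ℕ)) :=
  {s | ∀ m : I, (s.filter (fun p => p.1 = m)).card ≤ (m : ℕ)}

/-- (b_j)_{j<ω} is an indiscernible sequence of n-tuples over ∅: any two strictly increasing
finite tuples of the same length from the sequence satisfy the same formulas. -/
def IsIndiscernible {L : FirstOrder.Language.{u, v}} {M : Type w} [L.Structure M] {n : ℕ}
    (b : ℕ → Fin n → M) : Prop :=
  ∀ (l : ℕ) (ψ : L.Formula (Fin l × Fin n)) (g h : Fin l → ℕ),
    StrictMono g → StrictMono h →
      (ψ.Realize (fun p => b (g p.1) p.2) ↔ ψ.Realize (fun p => b (h p.1) p.2))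

/-- φ(x̄,ȳ) has the finite dividing property (relative to T). -/
def HasFDP {L : FirstOrder.Language.{u, v}} (T : L.Theory) {m n : ℕ}
    (φ : L.Formula (Fin m ⊕ Fin n)) : Prop :=
  ∀ k : ℕ, ∃ (M : FirstOrder.Language.Theory.ModelType.{u, v, w} T) (b : ℕ → Fin n → M),
    IsIndiscernible (L := L) b ∧
    (∀ uu : Finset ℕ, uu.card = k → ∃ xx : Fin m → M, ∀ j ∈ uu, φ.Realize (Sum.elim xx (b j))) ∧
    (∃ uu : Finset ℕ, ¬ ∃ xx : Fin m → M, ∀ j ∈ uu, φ.Realize (Sum.elim xx (b j)))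

namespace FDPAux
open Filter
variable {L : FirstOrder.Language.{u, v}} {m n : ℕ}

/-- Iterated Fubini power of the hyperfilter on tuples. -/
noncomputable def Wuf : (l : ℕ) → Ultrafilter (Fin l → ℕ)
  | 0 => pure (fun i => i.elim0)
  | (l+1) => (Wuf l).bind (fun v => (Filter.hyperfilter ℕ).map (Fin.snoc v))

theorem mem_Wuf_succ {l : ℕ} {A : Set (Fin (l+1) → ℕ)} :
    A ∈ Wuf (l+1) ↔
      {v : Fin l → ℕ | {x : ℕ | Fin.snoc v x ∈ A} ∈ Filter.hyperfilter ℕ} ∈ Wuf l := by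
  change A ∈ (Wuf l).bind _ ↔ _
  rw [← Ultrafilter.mem_coe]
  erw [Filter.mem_bind']

theorem strictMono_snoc {l : ℕ} {v : Fin l → ℕ} {x : ℕ} (hv : StrictMono v)
    (hx : ∀ i, v i < x) : StrictMono (Fin.snoc v x) := by
  intro a b hab
  rcases Fin.eq_castSucc_or_eq_last b with ⟨b', rfl⟩ | rfl
  · obtain ⟨a', rfl⟩ := Fin.exists_castSucc_eq.2
      (Fin.ne_last_of_lt (lt_of_lt_of_le hab (Fin.le_last b'.castSucc)))
    simp only [Fin.snoc_castSucc]
    exact hv (by exact_mod_cast hab)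
  · obtain ⟨a', rfl⟩ := Fin.exists_castSucc_eq.2 (Fin.ne_last_of_lt hab)
    simp only [Fin.snoc_castSucc, Fin.snoc_last]
    exact hx a'

theorem strictMonoSet_mem_Wuf : ∀ l : ℕ, {v : Fin l → ℕ | StrictMono v} ∈ Wuf l := by
  intro l
  induction l with
  | zero =>
    rw [show Wuf 0 = pure (fun i : Fin 0 => i.elim0) from rfl, Ultrafilter.mem_pure]
    exact fun a => a.elim0
  | succ l ih =>
    rw [mem_Wuf_succ]
    filter_upwards [ih] with v hv
    have : {x : ℕ | Finset.univ.sup v < x} ∈ Filter.hyperfilter ℕ := by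
      apply Nat.hyperfilter_le_atTop
      exact Filter.mem_atTop ((Finset.univ.sup v) + 1)
    filter_upwards [this] with x hx
    exact strictMono_snoc hv (fun i => lt_of_le_of_lt (Finset.le_sup (Finset.mem_univ i)) hx)

theorem Wuf_coherence : ∀ (R l : ℕ) (γ : Fin l → Fin R), StrictMono γ →
    ∀ A ∈ Wuf l, {v : Fin R → ℕ | v ∘ γ ∈ A} ∈ Wuf R := by
  intro R
  induction R with
  | zero =>
    intro l γ hγ A hA
    cases l with
    | zero =>
      rw [show Wuf 0 = pure (fun i : Fin 0 => (i.elim0 : ℕ)) from rfl,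
        Ultrafilter.mem_pure] at hA ⊢
      have h0 : ((fun i : Fin 0 => (i.elim0 : ℕ)) ∘ γ) = (fun i : Fin 0 => (i.elim0 : ℕ)) :=
        funext fun i => i.elim0
      show ((fun i : Fin 0 => (i.elim0 : ℕ)) ∘ γ) ∈ A
      rw [h0]; exact hA
    | succ l => exact (γ 0).elim0
  | succ R ih =>
    intro l γ hγ A hA
    by_cases hlast : ∃ i, γ i = Fin.last R
    · obtain ⟨i₀, hi₀⟩ := hlast
      cases l with
      | zero => exact i₀.elim0
      | succ l' =>
        have hi₀' : i₀ = Fin.last l' := by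
          by_contra hne
          have : i₀ < Fin.last l' := lt_of_le_of_ne (Fin.le_last _) hne
          have := hγ this
          rw [hi₀] at this
          exact absurd this (not_lt.2 (Fin.le_last _))
        subst hi₀'
        have hlt : ∀ i : Fin l', (γ i.castSucc : Fin (R+1)) < Fin.last R := by
          intro i; rw [← hi₀]; exact hγ (Fin.castSucc_lt_last i)
        set γ' : Fin l' → Fin R := fun i => ⟨(γ i.castSucc : Fin (R+1)).val,
          by have := hlt i; exact Fin.val_lt_last (Fin.ne_last_of_lt this)⟩ with hγ'def
        have hγ'mono : StrictMono γ' := by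
          intro a b hab
          have := hγ (show (a.castSucc : Fin (l'+1)) < b.castSucc by exact_mod_cast hab)
          exact this
        have hcomp : ∀ (w : Fin R → ℕ) (x : ℕ),
            (Fin.snoc w x : Fin (R+1) → ℕ) ∘ γ = Fin.snoc (w ∘ γ') x := by
          intro w x
          funext i
          refine Fin.lastCases ?_ (fun i' => ?_) i
          · simp only [Function.comp_apply, hi₀, Fin.snoc_last]
          · simp only [Function.comp_apply, Fin.snoc_castSucc]
            have : γ i'.castSucc = (γ' i').castSucc := by
              apply Fin.ext; simp [hγ'def]
            rw [this, Fin.snoc_castSucc]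
        rw [mem_Wuf_succ] at hA ⊢
        have := ih l' γ' hγ'mono _ hA
        apply Filter.mem_of_superset this
        intro w hw
        simp only [Set.mem_setOf_eq] at hw ⊢
        apply Filter.mem_of_superset hw
        intro x hx
        simp only [Set.mem_setOf_eq] at hx ⊢
        rw [hcomp]; exact hx
    · push_neg at hlast
      set γ' : Fin l → Fin R := fun i => ⟨(γ i).val, Fin.val_lt_last (hlast i)⟩ with hγ'def
      have hγ'mono : StrictMono γ' := by
        intro a b hab; exact hγ hab
      have hcomp : ∀ (w : Fin R → ℕ) (x : ℕ),
          (Fin.snoc w x : Fin (R+1) → ℕ) ∘ γ = w ∘ γ' := by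
        intro w x; funext i
        have : γ i = (γ' i).castSucc := by apply Fin.ext; simp [hγ'def]
        simp only [Function.comp_apply, this, Fin.snoc_castSucc]
      rw [mem_Wuf_succ]
      have := ih l γ' hγ'mono A hA
      apply Filter.mem_of_superset this
      intro w hw
      simp only [Set.mem_setOf_eq] at hw ⊢
      have : {x : ℕ | (Fin.snoc w x : Fin (R+1) → ℕ) ∘ γ ∈ A} = Set.univ := by
        ext x; simp only [Set.mem_setOf_eq, Set.mem_univ, iff_true, hcomp]; exact hw
      rw [this]
      exact Filter.univ_mem


def Gsets : Set (Set (ℕ → ℕ)) :=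
  {S | ∃ (l : ℕ) (g : Fin l → ℕ), StrictMono g ∧ ∃ A ∈ Wuf l, S = {f | f ∘ g ∈ A}}

theorem Gsets_inter (S₁ S₂ : Set (ℕ → ℕ)) (h₁ : S₁ ∈ Gsets) (h₂ : S₂ ∈ Gsets) :
    ∃ S₃ ∈ Gsets, S₃ ⊆ S₁ ∩ S₂ := by
  obtain ⟨l₁, g₁, hg₁, A₁, hA₁, rfl⟩ := h₁
  obtain ⟨l₂, g₂, hg₂, A₂, hA₂, rfl⟩ := h₂
  set R : ℕ := (Finset.univ.sup (fun r => g₁ r + 1)) ⊔ (Finset.univ.sup (fun r => g₂ r + 1)) with hR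
  have hb₁ : ∀ r, g₁ r < R := by
    intro r; rw [hR]
    have h1 : g₁ r + 1 ≤ Finset.univ.sup (fun r => g₁ r + 1) :=
      Finset.le_sup (f := fun r => g₁ r + 1) (Finset.mem_univ r)
    exact lt_of_lt_of_le (Nat.lt_succ_self _) (h1.trans le_sup_left)
  have hb₂ : ∀ r, g₂ r < R := by
    intro r; rw [hR]
    have h1 : g₂ r + 1 ≤ Finset.univ.sup (fun r => g₂ r + 1) :=
      Finset.le_sup (f := fun r => g₂ r + 1) (Finset.mem_univ r)
    exact lt_of_lt_of_le (Nat.lt_succ_self _) (h1.trans le_sup_right)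
  set γ₁ : Fin l₁ → Fin R := fun r => ⟨g₁ r, hb₁ r⟩ with hγ₁
  set γ₂ : Fin l₂ → Fin R := fun r => ⟨g₂ r, hb₂ r⟩ with hγ₂
  have hγ₁m : StrictMono γ₁ := fun a b hab => by
    simp only [hγ₁, Fin.mk_lt_mk]; exact hg₁ hab
  have hγ₂m : StrictMono γ₂ := fun a b hab => by
    simp only [hγ₂, Fin.mk_lt_mk]; exact hg₂ hab
  set B : Set (Fin R → ℕ) := {v | v ∘ γ₁ ∈ A₁} ∩ {v | v ∘ γ₂ ∈ A₂} with hB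
  have hBmem : B ∈ Wuf R :=
    Filter.inter_mem (Wuf_coherence R l₁ γ₁ hγ₁m A₁ hA₁) (Wuf_coherence R l₂ γ₂ hγ₂m A₂ hA₂)
  refine ⟨{f | (fun r : Fin R => f r) ∈ B}, ⟨R, (fun r : Fin R => (r : ℕ)),
    fun a b hab => hab, B, hBmem, rfl⟩, ?_⟩
  rintro f ⟨hf₁, hf₂⟩
  constructor
  · show f ∘ g₁ ∈ A₁
    have : f ∘ g₁ = (fun r : Fin R => f r) ∘ γ₁ := rfl
    rw [this]; exact hf₁
  · show f ∘ g₂ ∈ A₂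
    have : f ∘ g₂ = (fun r : Fin R => f r) ∘ γ₂ := rfl
    rw [this]; exact hf₂

theorem Gsets_nonempty {S : Set (ℕ → ℕ)} (hS : S ∈ Gsets) : S.Nonempty := by
  obtain ⟨l, g, hg, A, hA, rfl⟩ := hS
  obtain ⟨v, hv⟩ := Ultrafilter.nonempty_of_mem hA
  refine ⟨fun x => if h : ∃ r, g r = x then v h.choose else 0, ?_⟩
  show _ ∈ A
  have : (fun x => if h : ∃ r, g r = x then v h.choose else 0) ∘ g = v := by
    funext r
    have he : ∃ r', g r' = g r := ⟨r, rfl⟩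
    simp only [Function.comp_apply, dif_pos he]
    congr 1
    exact hg.injective he.choose_spec
  rw [this]; exact hv

theorem univ_mem_Gsets : Set.univ ∈ Gsets := by
  refine ⟨0, (fun i => i.elim0), fun a => a.elim0, Set.univ, Filter.univ_mem, ?_⟩
  ext f; simp

theorem exists_gset_subset_sInter (t : Set (Set (ℕ → ℕ))) (hfin : t.Finite) :
    t ⊆ Gsets → ∃ S ∈ Gsets, S ⊆ ⋂₀ t := by
  refine Set.Finite.induction_on
    (motive := fun t _ => t ⊆ Gsets → ∃ S ∈ Gsets, S ⊆ ⋂₀ t) t hfin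
    (fun _ => ⟨Set.univ, univ_mem_Gsets, by simp⟩) ?_
  intro S t hS hfin ih hsub
  · 
    obtain ⟨S₀, hS₀, hsub₀⟩ := ih (fun x hx => hsub (Set.mem_insert_of_mem _ hx))
    obtain ⟨S₃, hS₃, hsub₃⟩ := Gsets_inter S S₀ (hsub (Set.mem_insert _ _)) hS₀
    refine ⟨S₃, hS₃, ?_⟩
    rw [Set.sInter_insert]
    exact fun x hx => ⟨(hsub₃ hx).1, hsub₀ (hsub₃ hx).2⟩

theorem Gsets_neBot : (Filter.generate Gsets).NeBot := by
  rw [Filter.generate_neBot_iff]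
  intro t hsub hfin
  obtain ⟨S, hS, hsub'⟩ := exists_gset_subset_sInter t hfin hsub
  exact (Gsets_nonempty hS).mono hsub'

noncomputable def Vuf : Ultrafilter (ℕ → ℕ) :=
  haveI := Gsets_neBot
  Ultrafilter.of (Filter.generate Gsets)

theorem mem_Vuf {l : ℕ} {g : Fin l → ℕ} (hg : StrictMono g) {A : Set (Fin l → ℕ)}
    (hA : A ∈ Wuf l) : {f : ℕ → ℕ | f ∘ g ∈ A} ∈ Vuf := by
  haveI := Gsets_neBot
  exact Ultrafilter.of_le (Filter.generate Gsets)
    (Filter.GenerateSets.basic ⟨l, g, hg, A, hA, rfl⟩)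

theorem mem_Vuf_iff {l : ℕ} {g : Fin l → ℕ} (hg : StrictMono g) {A : Set (Fin l → ℕ)} :
    {f : ℕ → ℕ | f ∘ g ∈ A} ∈ Vuf ↔ A ∈ Wuf l := by
  constructor
  · intro h
    by_contra hA
    have : Aᶜ ∈ Wuf l := Ultrafilter.compl_mem_iff_notMem.2 hA
    have h2 := mem_Vuf hg this
    have : {f : ℕ → ℕ | f ∘ g ∈ A}ᶜ = {f | f ∘ g ∈ Aᶜ} := rfl
    rw [← this] at h2
    exact (Ultrafilter.compl_mem_iff_notMem.1 h2) h
  · exact mem_Vuf hg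




noncomputable def conFormula (φ : L.Formula (Fin m ⊕ Fin n)) (l : ℕ) :
    L.Formula (Fin l × Fin n) :=
  Language.Formula.iExs (Fin m)
    (Language.Formula.relabel (Sum.elim Sum.inr Sum.inl)
      (Language.BoundedFormula.iInf
        (fun i : Fin l => φ.relabel (Sum.map id (fun q => (i, q)))) :
        L.Formula (Fin m ⊕ Fin l × Fin n)))

theorem realize_conFormula {M : Type w} [L.Structure M] (φ : L.Formula (Fin m ⊕ Fin n))
    (l : ℕ) (v : Fin l × Fin n → M) :
    (conFormula φ l).Realize v ↔
      ∃ xx : Fin m → M, ∀ i : Fin l, φ.Realize (Sum.elim xx (fun q => v (i, q))) := by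
  rw [conFormula, Language.Formula.realize_iExs]
  refine exists_congr fun xx => ?_
  rw [Language.Formula.realize_relabel, Language.Formula.Realize,
    Language.BoundedFormula.realize_iInf]
  refine forall_congr' fun i => ?_
  show (Language.Formula.relabel (Sum.map id (fun q => (i, q))) φ).Realize
      (Sum.elim v xx ∘ Sum.elim Sum.inr Sum.inl) ↔ _
  rw [Language.Formula.realize_relabel]
  apply iff_of_eq; congr 1
  funext a; cases a with
  | inl r => rfl
  | inr q => rfl

/-- Bridge: realization of `conFormula` along an enumeration of a finite set
equals consistency over that finite set. -/
theorem realize_conFormula_iff_con {M : Type w} [L.Structure M] (φ : L.Formula (Fin m ⊕ Fin n))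
    {β : Type*} (s : Finset β) (b : β → Fin n → M) (l : ℕ) (enum : Fin l → β)
    (henum : ∀ p, p ∈ s ↔ ∃ r, enum r = p) :
    (conFormula φ l).Realize (fun p => b (enum p.1) p.2) ↔
      ∃ xx : Fin m → M, ∀ p ∈ s, φ.Realize (Sum.elim xx (b p)) := by
  rw [realize_conFormula]
  refine exists_congr fun xx => ⟨fun h p hp => ?_, fun h i => ?_⟩
  · obtain ⟨r, rfl⟩ := (henum p).1 hp
    exact h r
  · exact h (enum i) ((henum _).2 ⟨i, rfl⟩)

/-- The canonical strictly monotone enumeration of a finite set of naturals. -/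
noncomputable def fenum (u : Finset ℕ) : Fin u.card → ℕ :=
  fun i => ((u.orderIsoOfFin rfl i : u) : ℕ)

theorem fenum_strictMono (u : Finset ℕ) : StrictMono (fenum u) := fun a b hab =>
  Subtype.coe_lt_coe.2 ((u.orderIsoOfFin rfl).strictMono hab)

theorem fenum_spec (u : Finset ℕ) : ∀ p, p ∈ u ↔ ∃ r, fenum u r = p := by
  intro p
  constructor
  · intro hp
    exact ⟨(u.orderIsoOfFin rfl).symm ⟨p, hp⟩, by simp [fenum]⟩
  · rintro ⟨r, rfl⟩
    exact (u.orderIsoOfFin rfl r).2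

end FDPAux
section Backward
open Filter FirstOrder.Language

theorem backward_dir {L : FirstOrder.Language.{u, v}} {m n : ℕ} (T : L.Theory)
    (φ : L.Formula (Fin m ⊕ Fin n)) {I : Set ℕ} (hI : I.Infinite)
    {Δ : Set (Finset (I × ℕ))} (hlow : deltaFDP I ⊆ Δ) (hhigh : Δ ⊆ deltaFDPstar I)
    (hA : AdmitsVia.{u, v, 0, w} T φ Δ) : HasFDP.{u, v, w} T φ := by
  obtain ⟨M, a, ha⟩ := hA
  intro k
  obtain ⟨mI, hmI, hmk'⟩ := hI.exists_gt k
  have hmk : k ≤ mI := le_of_lt hmk'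
  haveI : FirstOrder.Language.Theory.Model
      ((FDPAux.Vuf : Filter (ℕ → ℕ)).Product (fun _ => (M : Type w))) T := by
    rw [FirstOrder.Language.Theory.model_iff]
    intro σ hσ
    rw [Ultraproduct.sentence_realize]
    exact Filter.Eventually.of_forall
      (fun f => FirstOrder.Language.Theory.realize_sentence_of_mem (M := (M : Type w)) T hσ)
  refine ⟨FirstOrder.Language.Theory.ModelType.of T
    ((FDPAux.Vuf : Filter (ℕ → ℕ)).Product (fun _ => (M : Type w))), 
    fun j q => ((fun f : ℕ → ℕ => a (⟨mI, hmI⟩, f j) q) :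
      (FDPAux.Vuf : Filter (ℕ → ℕ)).Product (fun _ => (M : Type w))), ?_, ?_, ?_⟩
  · -- indiscernibility
    intro l ψ g h hg hh
    change (ψ.Realize fun p : Fin l × Fin n => ((fun f : ℕ → ℕ => a (⟨mI, hmI⟩, f (g p.1)) p.2) :
        (FDPAux.Vuf : Filter (ℕ → ℕ)).Product (fun _ => (M : Type w)))) ↔
      (ψ.Realize fun p : Fin l × Fin n => ((fun f : ℕ → ℕ => a (⟨mI, hmI⟩, f (h p.1)) p.2) :
        (FDPAux.Vuf : Filter (ℕ → ℕ)).Product (fun _ => (M : Type w))))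
    rw [Ultraproduct.realize_formula_cast
        (φ := ψ) (x := fun p : Fin l × Fin n => fun f : ℕ → ℕ => a (⟨mI, hmI⟩, f (g p.1)) p.2),
      Ultraproduct.realize_formula_cast
        (φ := ψ) (x := fun p : Fin l × Fin n => fun f : ℕ → ℕ => a (⟨mI, hmI⟩, f (h p.1)) p.2),
      Filter.eventually_iff, Filter.eventually_iff]
    exact (FDPAux.mem_Vuf_iff hg
        (A := {v : Fin l → ℕ | ψ.Realize (fun p => a (⟨mI, hmI⟩, v p.1) p.2)})).trans
      (FDPAux.mem_Vuf_iff hh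
        (A := {v : Fin l → ℕ | ψ.Realize (fun p => a (⟨mI, hmI⟩, v p.1) p.2)})).symm
  · -- all k-element sets are consistent
    intro uu hcard
    change ∃ xx : Fin m → (FDPAux.Vuf : Filter (ℕ → ℕ)).Product (fun _ => (M : Type w)),
      ∀ j ∈ uu, φ.Realize (Sum.elim xx (fun q => ((fun f : ℕ → ℕ => a (⟨mI, hmI⟩, f j) q) :
        (FDPAux.Vuf : Filter (ℕ → ℕ)).Product (fun _ => (M : Type w)))))
    refine (FDPAux.realize_conFormula_iff_con φ uu
        (fun j q => ((fun f : ℕ → ℕ => a (⟨mI, hmI⟩, f j) q) :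
          (FDPAux.Vuf : Filter (ℕ → ℕ)).Product (fun _ => (M : Type w)))) uu.card (FDPAux.fenum uu)
        (FDPAux.fenum_spec uu)).1 ?_
    beta_reduce
    rw [Ultraproduct.realize_formula_cast (φ := FDPAux.conFormula φ uu.card)
        (x := fun p : Fin uu.card × Fin n =>
          fun f : ℕ → ℕ => a (⟨mI, hmI⟩, f (FDPAux.fenum uu p.1)) p.2),
      Filter.eventually_iff]
    apply Filter.mem_of_superset
      (FDPAux.mem_Vuf (FDPAux.fenum_strictMono uu) (FDPAux.strictMonoSet_mem_Wuf uu.card))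
    intro f hf
    simp only [Set.mem_setOf_eq] at hf ⊢
    have henum : ∀ p, p ∈ Finset.image
        (fun r => ((⟨mI, hmI⟩ : I), (f ∘ FDPAux.fenum uu) r)) Finset.univ ↔
        ∃ r, ((⟨mI, hmI⟩ : I), (f ∘ FDPAux.fenum uu) r) = p := by
      intro p; simp [Finset.mem_image]
    have key := FDPAux.realize_conFormula_iff_con φ
      (Finset.image (fun r => ((⟨mI, hmI⟩ : I), (f ∘ FDPAux.fenum uu) r)) Finset.univ)
      a uu.card (fun r => (⟨mI, hmI⟩, (f ∘ FDPAux.fenum uu) r)) henum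
    rw [show (fun p : Fin uu.card × Fin n => a (⟨mI, hmI⟩, f (FDPAux.fenum uu p.1)) p.2) =
      (fun p : Fin uu.card × Fin n =>
        a ((fun r => ((⟨mI, hmI⟩ : I), (f ∘ FDPAux.fenum uu) r)) p.1) p.2) from rfl, key]
    apply (ha _).mpr
    apply hlow
    refine ⟨⟨mI, hmI⟩, ?_, ?_⟩
    · intro p hp
      obtain ⟨r, _, rfl⟩ := Finset.mem_image.1 hp
      rfl
    · rw [Finset.card_image_of_injective _ (fun r r' hrr' => hf.injective
        (show (f ∘ FDPAux.fenum uu) r = (f ∘ FDPAux.fenum uu) r' from congrArg Prod.snd hrr'))]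
      rw [Finset.card_univ, Fintype.card_fin, hcard]
      exact hmk
  · -- some finite set is inconsistent
    refine ⟨Finset.range (mI + 1), fun hcon => ?_⟩
    change ∃ xx : Fin m → (FDPAux.Vuf : Filter (ℕ → ℕ)).Product (fun _ => (M : Type w)),
      ∀ j ∈ Finset.range (mI + 1), φ.Realize (Sum.elim xx (fun q =>
        ((fun f : ℕ → ℕ => a (⟨mI, hmI⟩, f j) q) : (FDPAux.Vuf : Filter (ℕ → ℕ)).Product (fun _ => (M : Type w))))) at hcon
    replace hcon := (FDPAux.realize_conFormula_iff_con φ (Finset.range (mI + 1))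
        (fun j q => ((fun f : ℕ → ℕ => a (⟨mI, hmI⟩, f j) q) :
          (FDPAux.Vuf : Filter (ℕ → ℕ)).Product (fun _ => (M : Type w)))) _
        (FDPAux.fenum (Finset.range (mI + 1))) (FDPAux.fenum_spec _)).2 hcon
    beta_reduce at hcon
    rw [Ultraproduct.realize_formula_cast
        (φ := FDPAux.conFormula φ (Finset.range (mI + 1)).card)
        (x := fun p : Fin (Finset.range (mI + 1)).card × Fin n =>
          fun f : ℕ → ℕ => a (⟨mI, hmI⟩, f (FDPAux.fenum (Finset.range (mI + 1)) p.1)) p.2),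
      Filter.eventually_iff] at hcon
    have hsub : {f : ℕ → ℕ | f ∘ FDPAux.fenum (Finset.range (mI + 1)) ∈
        {v | StrictMono v}} ⊆
        {f : ℕ → ℕ | ((FDPAux.conFormula φ (Finset.range (mI + 1)).card).Realize
          (fun p => a (⟨mI, hmI⟩, f (FDPAux.fenum (Finset.range (mI + 1)) p.1)) p.2))}ᶜ := by
      intro f hf
      simp only [Set.mem_setOf_eq] at hf
      intro hreal
      simp only [Set.mem_setOf_eq] at hreal
      have henum : ∀ p, p ∈ Finset.image
          (fun r => ((⟨mI, hmI⟩ : I), (f ∘ FDPAux.fenum (Finset.range (mI + 1))) r))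
            Finset.univ ↔
          ∃ r, ((⟨mI, hmI⟩ : I), (f ∘ FDPAux.fenum (Finset.range (mI + 1))) r) = p := by
        intro p; simp [Finset.mem_image]
      have key := FDPAux.realize_conFormula_iff_con φ
        (Finset.image (fun r => ((⟨mI, hmI⟩ : I),
          (f ∘ FDPAux.fenum (Finset.range (mI + 1))) r)) Finset.univ)
        a (Finset.range (mI + 1)).card
        (fun r => (⟨mI, hmI⟩, (f ∘ FDPAux.fenum (Finset.range (mI + 1))) r)) henum
      rw [show (fun p : Fin (Finset.range (mI + 1)).card × Fin n =>
          a (⟨mI, hmI⟩, f (FDPAux.fenum (Finset.range (mI + 1)) p.1)) p.2) =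
        (fun p : Fin (Finset.range (mI + 1)).card × Fin n =>
          a ((fun r => ((⟨mI, hmI⟩ : I),
            (f ∘ FDPAux.fenum (Finset.range (mI + 1))) r)) p.1) p.2) from rfl, key] at hreal
      have hmem := (ha _).mp hreal
      have hstar := hhigh hmem ⟨mI, hmI⟩
      rw [Finset.filter_true_of_mem (fun p hp => by
        obtain ⟨r, _, rfl⟩ := Finset.mem_image.1 hp; rfl)] at hstar
      rw [Finset.card_image_of_injective _ (fun r r' hrr' => hf.injective
        (show (f ∘ FDPAux.fenum (Finset.range (mI + 1))) r =
          (f ∘ FDPAux.fenum (Finset.range (mI + 1))) r' from congrArg Prod.snd hrr'))] at hstar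
      rw [Finset.card_univ, Fintype.card_fin, Finset.card_range] at hstar
      have hcoe : ((⟨mI, hmI⟩ : I) : ℕ) = mI := rfl
      rw [hcoe] at hstar
      omega
    have hcompl := Filter.mem_of_superset
      (FDPAux.mem_Vuf (FDPAux.fenum_strictMono (Finset.range (mI + 1)))
        (FDPAux.strictMonoSet_mem_Wuf (Finset.range (mI + 1)).card)) hsub
    exact (Ultrafilter.compl_mem_iff_notMem.1 hcompl) hcon

end Backward
namespace FDPAux
open FirstOrder Filter FirstOrder.Language

variable {L : FirstOrder.Language.{u, v}} {m n : ℕ}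

/-- Consistency of a finite set along an indiscernible sequence depends only on cardinality. -/
theorem con_card_invariant {M : Type w} [L.Structure M] (φ : L.Formula (Fin m ⊕ Fin n))
    {b : ℕ → Fin n → M} (hb : IsIndiscernible (L := L) b) {u v : Finset ℕ}
    (huv : u.card = v.card) :
    (∃ xx : Fin m → M, ∀ j ∈ u, φ.Realize (Sum.elim xx (b j))) ↔
      (∃ xx : Fin m → M, ∀ j ∈ v, φ.Realize (Sum.elim xx (b j))) := by
  have hg : StrictMono (fun i : Fin v.card => fenum u (Fin.cast huv.symm i)) := by
    intro a b' hab
    exact fenum_strictMono u (by rw [Fin.lt_def] at hab ⊢; exact hab)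
  have hgspec : ∀ p, p ∈ u ↔ ∃ r : Fin v.card, fenum u (Fin.cast huv.symm r) = p := by
    intro p
    rw [fenum_spec u p]
    constructor
    · rintro ⟨r, rfl⟩; exact ⟨Fin.cast huv r, congrArg (fenum u) (Fin.ext rfl)⟩
    · rintro ⟨r, rfl⟩; exact ⟨Fin.cast huv.symm r, rfl⟩
  rw [← realize_conFormula_iff_con φ u b v.card (fun i => fenum u (Fin.cast huv.symm i)) hgspec,
    ← realize_conFormula_iff_con φ v b v.card (fenum v) (fenum_spec v)]
  exact hb v.card (conFormula φ v.card) _ _ hg (fenum_strictMono v)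

/-- Threshold extraction from the finite dividing property. -/
theorem exists_threshold (T : L.Theory) (φ : L.Formula (Fin m ⊕ Fin n))
    (hF : HasFDP.{u, v, w} T φ) (k : ℕ) :
    ∃ N : ℕ, k ≤ N ∧ ∃ (M : FirstOrder.Language.Theory.ModelType.{u, v, w} T)
      (b : ℕ → Fin n → M),
      (∀ u : Finset ℕ, u.card ≤ N → ∃ xx : Fin m → M, ∀ j ∈ u,
        φ.Realize (Sum.elim xx (b j))) ∧
      (∀ u : Finset ℕ, u.card = N + 1 → ¬ ∃ xx : Fin m → M, ∀ j ∈ u,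
        φ.Realize (Sum.elim xx (b j))) := by
  obtain ⟨M, b, hind, hpos, u₀, hneg⟩ := hF k
  classical
  have hS : ¬ ∃ xx : Fin m → M, ∀ j ∈ Finset.range u₀.card,
      φ.Realize (Sum.elim xx (b j)) := by
    intro h
    exact hneg ((con_card_invariant φ hind (Finset.card_range u₀.card)).1 h)
  have hne : ∃ l : ℕ, ¬ ∃ xx : Fin m → M, ∀ j ∈ Finset.range l,
      φ.Realize (Sum.elim xx (b j)) := ⟨u₀.card, hS⟩
  set l₀ := Nat.find hne with hl₀def
  have hl₀ := Nat.find_spec hne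
  have hlt : ∀ l < l₀, ∃ xx : Fin m → M, ∀ j ∈ Finset.range l,
      φ.Realize (Sum.elim xx (b j)) := by
    intro l hl
    by_contra hcon
    exact Nat.find_min hne hl hcon
  have hkl : k < l₀ := by
    rcases lt_or_ge k l₀ with h | h
    · exact h
    · exfalso
      obtain ⟨xx, hxx⟩ := hpos (Finset.range k) (Finset.card_range k)
      exact hl₀ ⟨xx, fun j hj => hxx j (Finset.mem_range.2
        (lt_of_lt_of_le (Finset.mem_range.1 hj) h))⟩
  refine ⟨l₀ - 1, by omega, M, b, ?_, ?_⟩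
  · intro u hu
    rw [con_card_invariant φ hind (show u.card = (Finset.range u.card).card by
      rw [Finset.card_range])]
    exact hlt u.card (by omega)
  · intro u hu hcon
    have : u.card = (Finset.range l₀).card := by rw [Finset.card_range]; omega
    exact hl₀ ((con_card_invariant φ hind this).1 hcon)

/-- Reduction of a natural number into `Fin (R+1)`. -/
def eR (R : ℕ) (j : ℕ) : Fin (R + 1) := ⟨j % (R + 1), Nat.mod_lt _ (Nat.succ_pos R)⟩

noncomputable def xiFormula (φ : L.Formula (Fin m ⊕ Fin n)) (R : ℕ) (u : Finset ℕ) :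
    L.Formula (Fin (R + 1) × Fin n) :=
  (conFormula φ u.card).relabel (fun p => (eR R (fenum u p.1), p.2))

theorem realize_xiFormula {M : Type w} [L.Structure M] (φ : L.Formula (Fin m ⊕ Fin n))
    (R : ℕ) (u : Finset ℕ) (d : Fin (R + 1) × Fin n → M) :
    (xiFormula φ R u).Realize d ↔
      ∃ xx : Fin m → M, ∀ j ∈ u, φ.Realize (Sum.elim xx (fun q => d (eR R j, q))) := by
  rw [xiFormula, Language.Formula.realize_relabel]
  exact realize_conFormula_iff_con φ u (fun j q => d (eR R j, q)) u.card (fenum u)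
    (fenum_spec u)

noncomputable def thetaSentence (φ : L.Formula (Fin m ⊕ Fin n)) (mm R : ℕ) : L.Sentence :=
  Language.Formula.iExs (Fin (R + 1) × Fin n)
    (Language.Formula.relabel (Sum.inr : Fin (R + 1) × Fin n → Empty ⊕ (Fin (R + 1) × Fin n))
      ((Language.BoundedFormula.iInf
          (fun u : (((Finset.range (R + 1)).powerset).filter (fun u => u.card ≤ mm)) =>
            xiFormula φ R u)) ⊓
        (Language.BoundedFormula.iInf
          (fun u : (((Finset.range (R + 1)).powerset).filter (fun u => u.card = mm + 1)) =>
            (xiFormula φ R u).not))))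

theorem realize_thetaSentence {M : Type w} [L.Structure M] (φ : L.Formula (Fin m ⊕ Fin n))
    (mm R : ℕ) :
    (M ⊨ (thetaSentence φ mm R)) ↔
      ∃ d : ℕ → Fin n → M,
        (∀ u : Finset ℕ, u ⊆ Finset.range (R + 1) → u.card ≤ mm →
          ∃ xx : Fin m → M, ∀ j ∈ u, φ.Realize (Sum.elim xx (d j))) ∧
        (∀ u : Finset ℕ, u ⊆ Finset.range (R + 1) → u.card = mm + 1 →
          ¬ ∃ xx : Fin m → M, ∀ j ∈ u, φ.Realize (Sum.elim xx (d j))) := by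
  rw [Language.Sentence.Realize, thetaSentence, Language.Formula.realize_iExs]
  simp only [Language.Formula.realize_relabel, Sum.elim_comp_inr]
  constructor
  · rintro ⟨dd, hdd⟩
    rw [Language.Formula.Realize, Language.BoundedFormula.realize_inf] at hdd
    obtain ⟨h1, h2⟩ := hdd
    rw [Language.BoundedFormula.realize_iInf] at h1 h2
    refine ⟨fun j q => dd (eR R j, q), fun u hsub hcard => ?_, fun u hsub hcard => ?_⟩
    · have : (xiFormula φ R u).Realize dd :=
        h1 ⟨u, Finset.mem_filter.2 ⟨Finset.mem_powerset.2 hsub, hcard⟩⟩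
      rw [realize_xiFormula] at this
      exact this
    · have : ¬ (xiFormula φ R u).Realize dd :=
        h2 ⟨u, Finset.mem_filter.2 ⟨Finset.mem_powerset.2 hsub, hcard⟩⟩
      rw [realize_xiFormula] at this
      exact this
  · rintro ⟨d, h1, h2⟩
    refine ⟨fun p => d (p.1 : ℕ) p.2, ?_⟩
    rw [Language.Formula.Realize, Language.BoundedFormula.realize_inf]
    constructor
    · rw [Language.BoundedFormula.realize_iInf]
      rintro ⟨u, hu⟩
      obtain ⟨hsub, hcard⟩ := Finset.mem_filter.1 hu
      change (xiFormula φ R u).Realize (fun p : Fin (R+1) × Fin n => d (p.1 : ℕ) p.2)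
      rw [realize_xiFormula]
      obtain ⟨xx, hxx⟩ := h1 u (Finset.mem_powerset.1 hsub) hcard
      refine ⟨xx, fun j hj => ?_⟩
      have hjR : j % (R + 1) = j :=
        Nat.mod_eq_of_lt (Finset.mem_range.1 (Finset.mem_powerset.1 hsub hj))
      show φ.Realize (Sum.elim xx (fun q => d (j % (R + 1)) q))
      rw [hjR]
      exact hxx j hj
    · rw [Language.BoundedFormula.realize_iInf]
      rintro ⟨u, hu⟩
      obtain ⟨hsub, hcard⟩ := Finset.mem_filter.1 hu
      change ¬ (xiFormula φ R u).Realize (fun p : Fin (R+1) × Fin n => d (p.1 : ℕ) p.2)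
      rw [realize_xiFormula]
      rintro ⟨xx, hxx⟩
      refine h2 u (Finset.mem_powerset.1 hsub) hcard ⟨xx, fun j hj => ?_⟩
      have hjR : j % (R + 1) = j :=
        Nat.mod_eq_of_lt (Finset.mem_range.1 (Finset.mem_powerset.1 hsub hj))
      have := hxx j hj
      change φ.Realize (Sum.elim xx (fun q => d (j % (R + 1)) q)) at this
      rw [hjR] at this
      exact this

/-- Enumeration of an arbitrary finite set. -/
noncomputable def genum {β : Type*} (s : Finset β) : Fin s.card → β :=
  fun r => (s.equivFin.symm r : β)

theorem genum_spec {β : Type*} (s : Finset β) : ∀ p, p ∈ s ↔ ∃ r, genum s r = p := by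
  intro p
  constructor
  · intro hp
    exact ⟨s.equivFin ⟨p, hp⟩, by simp [genum]⟩
  · rintro ⟨r, rfl⟩
    exact (s.equivFin.symm r).2

end FDPAux
section Forward
open Filter FirstOrder.Language

theorem forward_dir {L : FirstOrder.Language.{u, v}} {m n : ℕ} (T : L.Theory)
    (hT : T.IsComplete) (φ : L.Formula (Fin m ⊕ Fin n)) (hF : HasFDP.{u, v, w} T φ) :
    ∃ I : Set ℕ, I.Infinite ∧ 0 ∉ I ∧
      ∃ Δ : Set (Finset (I × ℕ)), IsPattern Δ ∧ deltaFDP I ⊆ Δ ∧ Δ ⊆ deltaFDPstar I ∧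
        AdmitsVia.{u, v, 0, w} T φ Δ := by
  classical
  have hth : ∀ k, ∃ N, k ≤ N ∧
      ∃ (M : FirstOrder.Language.Theory.ModelType.{u, v, w} T) (b : ℕ → Fin n → M),
      (∀ u1 : Finset ℕ, u1.card ≤ N →
        ∃ xx : Fin m → M, ∀ j ∈ u1, φ.Realize (Sum.elim xx (b j))) ∧
      (∀ u1 : Finset ℕ, u1.card = N + 1 →
        ¬ ∃ xx : Fin m → M, ∀ j ∈ u1, φ.Realize (Sum.elim xx (b j))) := by
    intro k; obtain ⟨N, hN, M, b, h1, h2⟩ := FDPAux.exists_threshold T φ hF k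
    exact ⟨N, hN, M, b, h1, h2⟩
  set I : Set ℕ := {N | 1 ≤ N ∧
      ∃ (M : FirstOrder.Language.Theory.ModelType.{u, v, w} T) (b : ℕ → Fin n → M),
      (∀ u1 : Finset ℕ, u1.card ≤ N →
        ∃ xx : Fin m → M, ∀ j ∈ u1, φ.Realize (Sum.elim xx (b j))) ∧
      (∀ u1 : Finset ℕ, u1.card = N + 1 →
        ¬ ∃ xx : Fin m → M, ∀ j ∈ u1, φ.Realize (Sum.elim xx (b j)))} with hI
  have hInf : I.Infinite := by
    by_contra hfin
    rw [Set.not_infinite] at hfin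
    obtain ⟨B, hB⟩ := hfin.bddAbove
    obtain ⟨N, hN1, hN2⟩ := hth (B + 1)
    have : N ≤ B := hB ⟨by omega, hN2⟩
    omega
  have h0I : 0 ∉ I := by
    intro h
    rw [hI] at h
    exact absurd h.1 (by omega)
  obtain ⟨N₀, hN₀', M₀, b₀, hb₀⟩ := hth 0
  have hWit : ∀ (p : I) (R : ℕ), ∃ d : ℕ → Fin n → (M₀ : Type w),
      (∀ u1 : Finset ℕ, u1 ⊆ Finset.range (R + 1) → u1.card ≤ (p : ℕ) →
        ∃ xx : Fin m → (M₀ : Type w), ∀ j ∈ u1, φ.Realize (Sum.elim xx (d j))) ∧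
      (∀ u1 : Finset ℕ, u1 ⊆ Finset.range (R + 1) → u1.card = (p : ℕ) + 1 →
        ¬ ∃ xx : Fin m → (M₀ : Type w), ∀ j ∈ u1, φ.Realize (Sum.elim xx (d j))) := by
    intro p R
    obtain ⟨Mp, b, h1, h2⟩ := p.2.2
    have hMp : (Mp : Type w) ⊨ FDPAux.thetaSentence φ (p : ℕ) R :=
      (FDPAux.realize_thetaSentence φ _ R).2
        ⟨b, fun u1 _ hc => h1 u1 hc, fun u1 _ hc => h2 u1 hc⟩
    have := (hT.realize_sentence_iff (FDPAux.thetaSentence φ (p : ℕ) R) (M₀ : Type w)).2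
      ((hT.realize_sentence_iff _ (Mp : Type w)).1 hMp)
    exact (FDPAux.realize_thetaSentence φ _ R).1 this
  haveI : Nonempty I := hInf.nonempty.to_subtype
  obtain ⟨e, he⟩ := exists_surjective_nat (I × ℕ)
  set Rof : ℕ → I → ℕ := fun i p =>
    (Finset.range (i + 1)).sup (fun t => if (e t).1 = p then (e t).2 else 0) with hRof
  set wmap : ℕ → I × ℕ → Fin n → (M₀ : Type w) :=
    fun i pj => (hWit pj.1 (Rof i pj.1)).choose pj.2 with hwmap
  have hw := fun (i : ℕ) (p : I) => (hWit p (Rof i p)).choose_spec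
  have hRge : ∀ (p : I) (B : ℕ), ∃ i₀, ∀ i, i₀ ≤ i → B ≤ Rof i p := by
    intro p B
    obtain ⟨i₀, hi₀⟩ := he (p, B)
    refine ⟨i₀, fun i hi => ?_⟩
    have hmem : i₀ ∈ Finset.range (i + 1) := Finset.mem_range.2 (by omega)
    have hle := Finset.le_sup (f := fun t => if (e t).1 = p then (e t).2 else 0) hmem
    simpa [hi₀] using hle
  have hcof : ∀ i₀ : ℕ, {i : ℕ | i₀ ≤ i} ∈ Filter.hyperfilter ℕ := by
    intro i₀
    have hfin : {i : ℕ | i < i₀}.Finite := Set.finite_Iio i₀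
    have := hfin.compl_mem_hyperfilter
    have heq : {i : ℕ | i < i₀}ᶜ = {i : ℕ | i₀ ≤ i} := by
      ext i; simp [not_lt]
    rwa [heq] at this
  haveI : FirstOrder.Language.Theory.Model
      ((Filter.hyperfilter ℕ : Filter ℕ).Product (fun _ => (M₀ : Type w))) T := by
    rw [FirstOrder.Language.Theory.model_iff]
    intro σ hσ
    rw [Ultraproduct.sentence_realize]
    exact Filter.Eventually.of_forall
      (fun i => FirstOrder.Language.Theory.realize_sentence_of_mem (M := (M₀ : Type w)) T hσ)
  set aN : I × ℕ → Fin n →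
      ((Filter.hyperfilter ℕ : Filter ℕ).Product (fun _ => (M₀ : Type w))) :=
    fun pj q => ((fun i => wmap i pj q) :
      (Filter.hyperfilter ℕ : Filter ℕ).Product (fun _ => (M₀ : Type w))) with haN
  have los2 : ∀ s : Finset (I × ℕ),
      (∃ xx, ∀ q ∈ s, φ.Realize (Sum.elim xx (aN q))) ↔
        ∀ᶠ i in (Filter.hyperfilter ℕ : Filter ℕ),
          ∃ xx : Fin m → (M₀ : Type w), ∀ q ∈ s, φ.Realize (Sum.elim xx (wmap i q)) := by
    intro s
    rw [← FDPAux.realize_conFormula_iff_con φ s aN s.card (FDPAux.genum s) (FDPAux.genum_spec s)]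
    change (FDPAux.conFormula φ s.card).Realize (fun p : Fin s.card × Fin n =>
      ((fun i : ℕ => wmap i (FDPAux.genum s p.1) p.2) :
        (Filter.hyperfilter ℕ : Filter ℕ).Product (fun _ => (M₀ : Type w)))) ↔ _
    rw [Ultraproduct.realize_formula_cast (φ := FDPAux.conFormula φ s.card)
        (x := fun p : Fin s.card × Fin n => fun i : ℕ => wmap i (FDPAux.genum s p.1) p.2)]
    refine Filter.eventually_congr (Filter.Eventually.of_forall (fun i => ?_))
    exact FDPAux.realize_conFormula_iff_con φ s (wmap i) s.card (FDPAux.genum s)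
      (FDPAux.genum_spec s)
  have claim_pos : ∀ (s : Finset (I × ℕ)) (p : I), (∀ q ∈ s, q.1 = p) → s.card ≤ (p : ℕ) →
      (∃ xx, ∀ q ∈ s, φ.Realize (Sum.elim xx (aN q))) := by
    intro s p hfst hcard
    rw [los2 s]
    obtain ⟨i₀, hi₀⟩ := hRge p ((s.image Prod.snd).sup id)
    rw [Filter.eventually_iff]
    apply Filter.mem_of_superset (hcof i₀)
    intro i hi
    simp only [Set.mem_setOf_eq] at hi ⊢
    have hsubu : s.image Prod.snd ⊆ Finset.range (Rof i p + 1) := by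
      intro j hj
      have hj' : j ≤ (s.image Prod.snd).sup id := Finset.le_sup (f := id) hj
      have := hi₀ i hi
      exact Finset.mem_range.2 (by omega)
    have hcardu : (s.image Prod.snd).card ≤ (p : ℕ) :=
      le_trans Finset.card_image_le hcard
    obtain ⟨xx, hxx⟩ := (hw i p).1 (s.image Prod.snd) hsubu hcardu
    refine ⟨xx, fun q hq => ?_⟩
    have hweq : wmap i q = (hWit p (Rof i p)).choose q.2 := by
      rw [hwmap]
      simp only
      rw [hfst q hq]
    rw [hweq]
    exact hxx q.2 (Finset.mem_image_of_mem Prod.snd hq)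
  have claim_neg : ∀ (s : Finset (I × ℕ)) (p : I), (∀ q ∈ s, q.1 = p) →
      s.card = (p : ℕ) + 1 → ¬ (∃ xx, ∀ q ∈ s, φ.Realize (Sum.elim xx (aN q))) := by
    intro s p hfst hcard hcon
    rw [los2 s, Filter.eventually_iff] at hcon
    obtain ⟨i₀, hi₀⟩ := hRge p ((s.image Prod.snd).sup id)
    have hcardeq : (s.image Prod.snd).card = s.card :=
      Finset.card_image_of_injOn (fun q hq q' hq' h2 =>
        Prod.ext (by rw [hfst q hq, hfst q' hq']) h2)
    have hsubcompl : {i : ℕ | i₀ ≤ i} ⊆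
        {i : ℕ | ∃ xx : Fin m → (M₀ : Type w), ∀ q ∈ s,
          φ.Realize (Sum.elim xx (wmap i q))}ᶜ := by
      intro i hi hconI
      simp only [Set.mem_setOf_eq] at hi hconI
      obtain ⟨xx, hxx⟩ := hconI
      have hsubu : s.image Prod.snd ⊆ Finset.range (Rof i p + 1) := by
        intro j hj
        have hj' : j ≤ (s.image Prod.snd).sup id := Finset.le_sup (f := id) hj
        have := hi₀ i hi
        exact Finset.mem_range.2 (by omega)
      apply (hw i p).2 (s.image Prod.snd) hsubu (by rw [hcardeq, hcard])
      refine ⟨xx, fun j hj => ?_⟩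
      obtain ⟨q, hq, rfl⟩ := Finset.mem_image.1 hj
      have hweq : wmap i q = (hWit p (Rof i p)).choose q.2 := by
        rw [hwmap]
        simp only
        rw [hfst q hq]
      rw [← hweq]
      exact hxx q hq
    exact (Ultrafilter.compl_mem_iff_notMem.1
      (Filter.mem_of_superset (hcof i₀) hsubcompl)) hcon
  refine ⟨I, hInf, h0I,
    {s : Finset (I × ℕ) | ∃ xx, ∀ q ∈ s, φ.Realize (Sum.elim xx (aN q))}, ?_, ?_, ?_, ?_⟩
  · intro s t hts hs
    obtain ⟨xx, hxx⟩ := hs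
    exact ⟨xx, fun q hq => hxx q (hts hq)⟩
  · rintro s ⟨p, hfst, hcardle⟩
    exact claim_pos s p hfst hcardle
  · intro s hs p
    by_contra hgt
    push_neg at hgt
    obtain ⟨t, hts, htc⟩ := Finset.exists_subset_card_eq
      (show (p : ℕ) + 1 ≤ (s.filter (fun q => q.1 = p)).card by omega)
    refine claim_neg t p (fun q hq => (Finset.mem_filter.1 (hts hq)).2) htc ?_
    obtain ⟨xx, hxx⟩ := hs
    exact ⟨xx, fun q hq => hxx q (Finset.filter_subset _ s (hts hq))⟩
  · exact ⟨FirstOrder.Language.Theory.ModelType.of T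
      ((Filter.hyperfilter ℕ : Filter ℕ).Product (fun _ => (M₀ : Type w))),
      aN, fun s => Iff.rfl⟩

end Forward


theorem statement4 {L : FirstOrder.Language.{u, v}} (T : L.Theory) (hT : T.IsComplete)
    {m n : ℕ} (φ : L.Formula (Fin m ⊕ Fin n)) :
    (HasFDP.{u, v, w} T φ ↔
      ∃ I : Set ℕ, I.Infinite ∧ 0 ∉ I ∧
        ∃ Δ : Set (Finset (I × ℕ)), IsPattern Δ ∧ deltaFDP I ⊆ Δ ∧ Δ ⊆ deltaFDPstar I ∧
          AdmitsVia.{u, v, 0, w} T φ Δ) ∧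
    ((∃ (m' n' : ℕ) (ψ : L.Formula (Fin m' ⊕ Fin n')), HasFDP.{u, v, w} T ψ) ↔
      ∃ I : Set ℕ, I.Infinite ∧ 0 ∉ I ∧
        ∃ Δ : Set (Finset (I × ℕ)), IsPattern Δ ∧ deltaFDP I ⊆ Δ ∧ Δ ⊆ deltaFDPstar I ∧
          ∃ (m' n' : ℕ) (ψ : L.Formula (Fin m' ⊕ Fin n')), AdmitsVia.{u, v, 0, w} T ψ Δ) := by
  constructor
  · constructor
    · intro h
      exact forward_dir T hT φ h
    · rintro ⟨I, hInf, h0, Δ, hpat, hlow, hhigh, hA⟩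
      exact backward_dir T φ hInf hlow hhigh hA
  · constructor
    · rintro ⟨m', n', ψ, h⟩
      obtain ⟨I, hInf, h0, Δ, hpat, hlow, hhigh, hA⟩ := forward_dir T hT ψ h
      exact ⟨I, hInf, h0, Δ, hpat, hlow, hhigh, m', n', ψ, hA⟩
    · rintro ⟨I, hInf, h0, Δ, hpat, hlow, hhigh, m', n', ψ, hA⟩
      exact ⟨m', n', ψ, backward_dir T ψ hInf hlow hhigh hA⟩
end

section
/- Suppose 2 ≤ k < n and let I be a linearly ordered index set. For any S ⊆ [I]^k, there exist i* < ω, an index set I', and an n-clique-free S' ⊆ [I']^k such that Δ_{n,k}(S) is an instance of Δ_{n,k}(S')^{i*}. Concretely one may take i* = C(n−1, k−1), I' = I × {0,…,n−2}, and S' = { {(x, h(x)) : x ∈ v} : v ∈ S and h : v → {0,…,n−2} is strictly increasing }. -/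
universe x y

/-- Δ^m : the pattern on [I]^{≤m} consisting of finite s with ⋃ s ∈ Δ. -/
def patternPow {I : Type x} (Δ : Set (Finset I)) (m : ℕ) :
    Set (Finset {u : Finset I // u.card ≤ m}) :=
  letI := Classical.decEq I
  {s | s.sup (fun u => u.1) ∈ Δ}

/-- The pattern Δ_{n,k}(S) on [I]^{k-1}: finite sets s of (k-1)-element subsets of I such that
there is no (n-1)-element v ⊆ I with all (k-1)-element subsets of v in s and all k-element
subsets of v in S. -/
def deltaNK {I : Type x} (n k : ℕ) (S : Set (Finset I)) :
    Set (Finset {u : Finset I // u.card = k - 1}) :=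
  {s | ¬ ∃ v : Finset I, v.card = n - 1 ∧
      (∀ (u : Finset I) (hu : u.card = k - 1), u ⊆ v →
        (⟨u, hu⟩ : {u : Finset I // u.card = k - 1}) ∈ s) ∧
      (∀ w : Finset I, w ⊆ v → w.card = k → w ∈ S)}

/-- S ⊆ [I]^k is n-clique-free: no n-element w ⊆ I has all its k-element subsets in S. -/
def CliqueFreeSet {I : Type x} (n k : ℕ) (S : Set (Finset I)) : Prop :=
  ¬ ∃ w : Finset I, w.card = n ∧ ∀ v : Finset I, v ⊆ w → v.card = k → v ∈ S

/-- The concrete clique-free copy: S' on I × {0,…,n−2} consisting of the graphs of strictly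
increasing maps h : v → {0,…,n−2}, for v ∈ S. -/
def cliqueFreeify {I : Type x} [LinearOrder I] (n : ℕ) (S : Set (Finset I)) :
    Set (Finset (I × Fin (n - 1))) :=
  {w | ∃ v ∈ S, ∃ h : I → Fin (n - 1), StrictMonoOn h ↑v ∧ w = v.image (fun a => (a, h a))}

namespace St6

lemma deceq_eq {β : Sort*} (i j : DecidableEq β) : i = j := by
  funext a b; exact Subsingleton.elim _ _

section gr
variable {α : Type*} {β : Type*} [DecidableEq α] [DecidableEq β]

/-- graph of h over u -/
def gr (h : α → β) (u : Finset α) : Finset (α × β) := u.image fun a => (a, h a)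

lemma gr_card (h : α → β) (u : Finset α) : (gr h u).card = u.card :=
  Finset.card_image_of_injOn fun a _ b _ hab => congrArg Prod.fst hab

lemma gr_fst (h : α → β) (u : Finset α) : (gr h u).image Prod.fst = u := by
  ext a; simp [gr]

lemma gr_congr {h g : α → β} {u : Finset α} (H : ∀ a ∈ u, h a = g a) : gr h u = gr g u :=
  Finset.image_congr fun a ha => by rw [H a ha]

lemma gr_mono {h : α → β} {w u : Finset α} (hwu : w ⊆ u) : gr h w ⊆ gr h u :=
  Finset.image_subset_image hwu

lemma subset_gr {h : α → β} {u : Finset α} {w : Finset (α × β)} (hw : w ⊆ gr h u) :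
    w = gr h (w.image Prod.fst) ∧ w.image Prod.fst ⊆ u := by
  constructor
  · apply Finset.Subset.antisymm
    · intro p hp
      have := hw hp
      simp only [gr, Finset.mem_image] at this ⊢
      obtain ⟨a, ha, rfl⟩ := this
      exact ⟨a, ⟨(a, h a), hp, rfl⟩, rfl⟩
    · intro p hp
      simp only [gr, Finset.mem_image] at hp
      obtain ⟨a, ⟨q, hq, rfl⟩, rfl⟩ := hp
      have := hw hq
      simp only [gr, Finset.mem_image] at this
      obtain ⟨b, _, rfl⟩ := this
      exact hq
  · intro a ha
    simp only [Finset.mem_image] at ha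
    obtain ⟨q, hq, rfl⟩ := ha
    have := hw hq
    simp only [gr, Finset.mem_image] at this
    obtain ⟨b, hb, rfl⟩ := this
    exact hb

end gr

section gm
variable {I : Type x} [LinearOrder I] {m : ℕ}

def gm (hm : 0 < m) (u : Finset I) (c : Finset (Fin m)) (a : I) : Fin m :=
  if h : a ∈ u ∧ c.card = u.card then
    c.orderEmbOfFin h.2 ((u.orderIsoOfFin rfl).symm ⟨a, h.1⟩)
  else ⟨0, hm⟩

lemma gm_apply (hm : 0 < m) {u : Finset I} {c : Finset (Fin m)} {a : I}
    (ha : a ∈ u) (hc : c.card = u.card) :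
    gm hm u c a = c.orderEmbOfFin hc ((u.orderIsoOfFin rfl).symm ⟨a, ha⟩) :=
  dif_pos ⟨ha, hc⟩

lemma gm_strictMonoOn (hm : 0 < m) {u : Finset I} {c : Finset (Fin m)} (hc : c.card = u.card) :
    StrictMonoOn (gm hm u c) ↑u := by
  intro a ha b hb hab
  rw [Finset.mem_coe] at ha hb
  rw [gm_apply hm ha hc, gm_apply hm hb hc]
  exact (c.orderEmbOfFin hc).strictMono
    ((u.orderIsoOfFin rfl).symm.strictMono (Subtype.mk_lt_mk.mpr hab))

lemma gm_image (hm : 0 < m) {u : Finset I} {c : Finset (Fin m)} (hc : c.card = u.card) :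
    u.image (gm hm u c) = c := by
  apply Finset.eq_of_subset_of_card_le
  · intro x hx
    rw [Finset.mem_image] at hx
    obtain ⟨a, ha, rfl⟩ := hx
    rw [gm_apply hm ha hc]
    exact Finset.orderEmbOfFin_mem _ _ _
  · rw [Finset.card_image_of_injOn (gm_strictMonoOn hm hc).injOn, hc]

lemma gm_unique (hm : 0 < m) {u : Finset I} {h : I → Fin m} (hh : StrictMonoOn h ↑u) :
    ∀ a ∈ u, h a = gm hm u (u.image h) a := by
  have hc : (u.image h).card = u.card := Finset.card_image_of_injOn hh.injOn
  have key : (fun i => h (u.orderEmbOfFin rfl i)) = ⇑((u.image h).orderEmbOfFin hc) := by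
    apply Finset.orderEmbOfFin_unique
    · intro i; exact Finset.mem_image_of_mem _ (Finset.orderEmbOfFin_mem _ _ _)
    · intro i j hij
      exact hh (Finset.orderEmbOfFin_mem _ _ _) (Finset.orderEmbOfFin_mem _ _ _)
        ((u.orderEmbOfFin rfl).strictMono hij)
  intro a ha
  rw [gm_apply hm ha hc]
  have h2 : u.orderEmbOfFin rfl ((u.orderIsoOfFin rfl).symm ⟨a, ha⟩) = a := by
    rw [← Finset.coe_orderIsoOfFin_apply, OrderIso.apply_symm_apply]
  calc h a = h (u.orderEmbOfFin rfl ((u.orderIsoOfFin rfl).symm ⟨a, ha⟩)) := by rw [h2]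
    _ = (u.image h).orderEmbOfFin hc ((u.orderIsoOfFin rfl).symm ⟨a, ha⟩) := congrFun key _

lemma reconstruct (hm : 0 < m) {v' : Finset (I × Fin m)}
    (hfun : ∀ p ∈ v', ∀ q ∈ v', p.1 = q.1 → p = q)
    (hmono : ∀ p ∈ v', ∀ q ∈ v', p.1 < q.1 → p.2 < q.2) :
    ∃ g : I → Fin m, StrictMonoOn g ↑(v'.image Prod.fst) ∧ v' = gr g (v'.image Prod.fst) := by
  classical
  set g : I → Fin m := fun a => if h : ∃ b, (a, b) ∈ v' then h.choose else ⟨0, hm⟩ with hgdef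
  have hmem : ∀ a ∈ v'.image Prod.fst, (a, g a) ∈ v' := by
    intro a ha
    rw [Finset.mem_image] at ha
    obtain ⟨p, hp, rfl⟩ := ha
    have h : ∃ b, (p.1, b) ∈ v' := ⟨p.2, hp⟩
    simp only [hgdef]
    rw [dif_pos h]
    exact h.choose_spec
  refine ⟨g, ?_, ?_⟩
  · intro a ha b hb hab
    rw [Finset.mem_coe] at ha hb
    exact hmono _ (hmem a ha) _ (hmem b hb) hab
  · apply Finset.Subset.antisymm
    · intro p hp
      have h1 : p.1 ∈ v'.image Prod.fst := Finset.mem_image_of_mem _ hp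
      have h3 : p = (p.1, g p.1) := hfun _ hp _ (hmem _ h1) rfl
      rw [h3]
      exact Finset.mem_image_of_mem _ h1
    · intro p hp
      simp only [gr] at hp
      obtain ⟨a, ha, rfl⟩ := Finset.mem_image.mp hp
      exact hmem a ha

end gm

end St6

lemma St6.pairs {I : Type x} [LinearOrder I] (n k : ℕ) (h2 : 2 ≤ k) (S : Set (Finset I))
    {v' : Finset (I × Fin (n - 1))} (hk : k ≤ v'.card)
    (hsub : ∀ w ⊆ v', w.card = k → w ∈ cliqueFreeify n S) :
    (∀ p ∈ v', ∀ q ∈ v', p.1 = q.1 → p = q) ∧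
    (∀ p ∈ v', ∀ q ∈ v', p.1 < q.1 → p.2 < q.2) := by
  have key : ∀ p ∈ v', ∀ q ∈ v', (p.1 = q.1 → p = q) ∧ (p.1 < q.1 → p.2 < q.2) := by
    intro p hp q hq
    by_cases hpq : p = q
    · subst hpq; exact ⟨fun _ => rfl, fun h => absurd h (lt_irrefl _)⟩
    · have hins : ({p, q} : Finset (I × Fin (n - 1))) ⊆ v' := by
        intro x hx
        rw [Finset.mem_insert, Finset.mem_singleton] at hx
        rcases hx with rfl | rfl <;> assumption
      have hcard2 : ({p, q} : Finset (I × Fin (n - 1))).card = 2 := by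
        rw [Finset.card_insert_of_notMem (by simpa using hpq), Finset.card_singleton]
      obtain ⟨w, hw1, hw2, hw3⟩ :=
        Finset.exists_subsuperset_card_eq hins (by rw [hcard2]; exact h2) hk
      obtain ⟨v₀, hv₀, h₀, hm₀, rfl⟩ := hsub w hw2 hw3
      have hp' := hw1 (Finset.mem_insert_self p {q})
      have hq' := hw1 (Finset.mem_insert_of_mem (Finset.mem_singleton_self q))
      rw [Finset.mem_image] at hp' hq'
      obtain ⟨a, ha, rfl⟩ := hp'
      obtain ⟨b, hb, rfl⟩ := hq'
      constructor
      · intro hab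
        obtain rfl : a = b := hab
        rfl
      · intro hab
        exact hm₀ ha hb hab
  exact ⟨fun p hp q hq => (key p hp q hq).1, fun p hp q hq => (key p hp q hq).2⟩

lemma St6.pp_mem {X : Type x} [inst : DecidableEq X] (Δ : Set (Finset X)) (m : ℕ)
    (s : Finset {u : Finset X // u.card ≤ m}) :
    s ∈ patternPow Δ m ↔ s.sup (fun u => u.1) ∈ Δ := by
  have h : Classical.decEq X = inst := St6.deceq_eq _ _
  unfold patternPow
  rw [h]
  rfl

lemma St6.image_classical {α : Type*} {β : Type*} [inst : DecidableEq β]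
    (s : Finset α) (f : α → β) :
    (letI := Classical.decEq β; s.image f) = s.image f := by
  have h : Classical.decEq β = inst := St6.deceq_eq _ _
  rw [h]

theorem statement6 {I : Type x} [LinearOrder I] (n k : ℕ) (h2 : 2 ≤ k) (hkn : k < n)
    (S : Set (Finset I)) (hS : ∀ v ∈ S, v.card = k) :
    (∀ w ∈ cliqueFreeify n S, w.card = k) ∧
    CliqueFreeSet n k (cliqueFreeify n S) ∧
    IsInstanceOf (deltaNK n k S)
      (patternPow (deltaNK n k (cliqueFreeify n S)) ((n - 1).choose (k - 1))) ∧
    ∃ (istar : ℕ) (I' : Type x) (S' : Set (Finset I')),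
      (∀ v ∈ S', v.card = k) ∧ CliqueFreeSet n k S' ∧
      IsInstanceOf (deltaNK n k S) (patternPow (deltaNK n k S') istar) := by
  have hm : 0 < n - 1 := by omega
  have part1 : ∀ w ∈ cliqueFreeify n S, w.card = k := by
    rintro w ⟨v, hv, h, hmono, rfl⟩
    rw [Finset.card_image_of_injOn fun a _ b _ hab => congrArg Prod.fst hab]
    exact hS v hv
  have part2 : CliqueFreeSet n k (cliqueFreeify n S) := by
    rintro ⟨w, hwcard, hwsub⟩
    obtain ⟨hfun, hmono⟩ := St6.pairs n k h2 S (by omega) hwsub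
    obtain ⟨g, hg, hw⟩ := St6.reconstruct hm hfun hmono
    have h1 : (w.image Prod.fst).card = n := by
      rw [hw, St6.gr_card] at hwcard; exact hwcard
    have h2' : ((w.image Prod.fst).image g).card = (w.image Prod.fst).card :=
      Finset.card_image_of_injOn hg.injOn
    have h3 : ((w.image Prod.fst).image g).card ≤ n - 1 := by
      calc ((w.image Prod.fst).image g).card
          ≤ (Finset.univ : Finset (Fin (n - 1))).card :=
            Finset.card_le_card (Finset.subset_univ _)
        _ = n - 1 := by simp
    omega
  have part3 : IsInstanceOf (deltaNK n k S)
      (patternPow (deltaNK n k (cliqueFreeify n S)) ((n - 1).choose (k - 1))) := by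
    intro s
    have instX : DecidableEq {x : Finset (I × Fin (n - 1)) // x.card = k - 1} := inferInstance
    let F : {u : Finset I // u.card = k - 1} →
        {b : Finset {x : Finset (I × Fin (n - 1)) // x.card = k - 1} //
          b.card ≤ (n - 1).choose (k - 1)} :=
      fun u => ⟨(Finset.univ.powersetCard (k - 1)).image
          (fun c => (⟨St6.gr (St6.gm hm u.1 c) u.1, by rw [St6.gr_card]; exact u.2⟩ :
            {x : Finset (I × Fin (n - 1)) // x.card = k - 1})),
        le_trans Finset.card_image_le (le_of_eq (by
          rw [Finset.card_powersetCard, Finset.card_univ, Fintype.card_fin]))⟩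
    refine ⟨F, fun t _ => ?_⟩
    rw [St6.pp_mem (deltaNK n k (cliqueFreeify n S)) ((n - 1).choose (k - 1)),
      St6.image_classical t F]
    set U := (t.image F).sup (fun u => u.1) with hU
    have memU : ∀ x : {x : Finset (I × Fin (n - 1)) // x.card = k - 1},
        x ∈ U ↔ ∃ u ∈ t, x ∈ (F u).1 := by
      intro x
      rw [hU, Finset.mem_sup]
      constructor
      · rintro ⟨b, hb, hx⟩
        rw [Finset.mem_image] at hb
        obtain ⟨u, hu, rfl⟩ := hb
        exact ⟨u, hu, hx⟩
      · rintro ⟨u, hu, hx⟩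
        exact ⟨F u, Finset.mem_image_of_mem _ hu, hx⟩
    show t ∈ deltaNK n k S ↔ U ∈ deltaNK n k (cliqueFreeify n S)
    simp only [deltaNK, Set.mem_setOf_eq]
    apply not_congr
    constructor
    · rintro ⟨v, hvcard, hvk1, hvk⟩
      have hcu : (Finset.univ : Finset (Fin (n - 1))).card = v.card := by
        rw [Finset.card_univ, Fintype.card_fin, hvcard]
      set g := St6.gm hm v Finset.univ with hgdef
      have hg : StrictMonoOn g ↑v := St6.gm_strictMonoOn hm hcu
      refine ⟨St6.gr g v, by rw [St6.gr_card, hvcard], ?_, ?_⟩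
      · intro u' hu' hsub
        obtain ⟨hrep, hsubv⟩ := St6.subset_gr hsub
        have hucard : (u'.image Prod.fst).card = k - 1 := by
          rw [hrep, St6.gr_card] at hu'; exact hu'
        rw [memU]
        refine ⟨⟨u'.image Prod.fst, hucard⟩, hvk1 _ hucard hsubv, ?_⟩
        show _ ∈ Finset.image _ _
        rw [Finset.mem_image]
        have hgu : StrictMonoOn g ↑(u'.image Prod.fst) := hg.mono (Finset.coe_subset.mpr hsubv)
        refine ⟨(u'.image Prod.fst).image g, ?_, ?_⟩
        · rw [Finset.mem_powersetCard]
          exact ⟨Finset.subset_univ _,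
            by rw [Finset.card_image_of_injOn hgu.injOn]; exact hucard⟩
        · apply Subtype.ext
          show St6.gr (St6.gm hm (u'.image Prod.fst) ((u'.image Prod.fst).image g))
            (u'.image Prod.fst) = u'
          conv_rhs => rw [hrep]
          exact St6.gr_congr fun a ha => (St6.gm_unique hm hgu a ha).symm
      · intro w' hsub hcard
        obtain ⟨hrep, hsubv⟩ := St6.subset_gr hsub
        have hwcard' : (w'.image Prod.fst).card = k := by
          rw [hrep, St6.gr_card] at hcard; exact hcard
        exact ⟨w'.image Prod.fst, hvk _ hsubv hwcard', g,
          hg.mono (Finset.coe_subset.mpr hsubv), hrep⟩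
    · rintro ⟨v', hv'card, hv'k1, hv'k⟩
      obtain ⟨hfun, hmono⟩ := St6.pairs n k h2 S (by omega) hv'k
      obtain ⟨g, hg, hrep⟩ := St6.reconstruct hm hfun hmono
      have hvcard : (v'.image Prod.fst).card = n - 1 := by
        rw [hrep, St6.gr_card] at hv'card; exact hv'card
      refine ⟨v'.image Prod.fst, hvcard, ?_, ?_⟩
      · intro u hu hsubv
        have h1 : St6.gr g u ⊆ v' := by rw [hrep]; exact St6.gr_mono hsubv
        have hcard : (St6.gr g u).card = k - 1 := by rw [St6.gr_card]; exact hu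
        have h2' := hv'k1 (St6.gr g u) hcard h1
        rw [memU] at h2'
        obtain ⟨⟨u₀, hu₀⟩, hu₀t, hmem⟩ := h2'
        obtain ⟨c, _, heq⟩ := Finset.mem_image.mp hmem
        have huu : u₀ = u := by
          have h3 := congrArg
            (fun x : {x : Finset (I × Fin (n - 1)) // x.card = k - 1} =>
              x.1.image Prod.fst) heq
          simpa [St6.gr_fst] using h3
        subst huu
        exact hu₀t
      · intro w hsubv hcard
        have h1 : St6.gr g w ⊆ v' := by rw [hrep]; exact St6.gr_mono hsubv
        have h2' := hv'k (St6.gr g w) h1 (by rw [St6.gr_card]; exact hcard)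
        obtain ⟨v₀, hv₀, h₀, _, heq⟩ := h2'
        have hw : w = v₀ := by
          have heq' : St6.gr g w = St6.gr h₀ v₀ := heq
          have h3 := congrArg (Finset.image Prod.fst) heq'
          rwa [St6.gr_fst, St6.gr_fst] at h3
        rw [hw]
        exact hv₀
  exact ⟨part1, part2, part3,
    (n - 1).choose (k - 1), I × Fin (n - 1), cliqueFreeify n S, part1, part2, part3⟩
end

section
/- Suppose 2 ≤ k < n ≤ n', let I be an index set, and let S ⊆ [I]^k. Then there exist an index set I' ⊇ I, a set S' ⊆ [I']^k, and i* < ω such that Δ_{n,k}(S) is an instance of Δ_{n',k}(S')^{i*}. Concretely one may take I' = I ∪ u* where u* is a new (n'−n)-element set, S' = S ∪ { v' ∈ [I']^k : v' ∩ u* ≠ ∅ }, and i* = C(k−1+(n'−n), k−1). -/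
universe x y

/-- S' = S ∪ { v' ∈ [I ∪ u*]^k : v' ∩ u* ≠ ∅ }, where u* is a new d-element set. -/
def padS {I : Type x} (k d : ℕ) (S : Set (Finset I)) : Set (Finset (I ⊕ Fin d)) :=
  letI := Classical.decEq I
  {w | (∃ v ∈ S, w = v.image Sum.inl) ∨ (w.card = k ∧ ∃ p ∈ w, p.isRight = true)}

lemma padS_card {I : Type x} (k d : ℕ) (S : Set (Finset I)) (hS : ∀ v ∈ S, v.card = k) :
    ∀ w ∈ padS k d S, w.card = k := by
  classical
  rintro w (⟨v, hv, rfl⟩ | ⟨hw, -⟩)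
  · rw [Finset.card_image_of_injective _ Sum.inl_injective]; exact hS v hv
  · exact hw

lemma mem_patternPow_iff {I : Type x} (Δ : Set (Finset I)) (m : ℕ) [inst : DecidableEq I]
    (s : Finset {u : Finset I // u.card ≤ m}) :
    s ∈ patternPow Δ m ↔ s.sup (fun u => u.1) ∈ Δ := by
  rw [Subsingleton.elim inst (Classical.decEq I)]
  exact Iff.rfl

lemma main_instance {I : Type x} (n n' k : ℕ) (h2 : 2 ≤ k) (hkn : k < n) (hnn' : n ≤ n')
    (S : Set (Finset I)) (hS : ∀ v ∈ S, v.card = k) :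
    IsInstanceOf (deltaNK n k S)
      (patternPow (deltaNK n' k (padS k (n' - n) S)) ((k - 1 + (n' - n)).choose (k - 1))) := by
  classical
  set d := n' - n with hd
  set m := (k - 1 + d).choose (k - 1) with hm
  let ustar : Finset (I ⊕ Fin d) := Finset.univ.image Sum.inr
  have hustar_card : ustar.card = d := by
    rw [Finset.card_image_of_injective _ Sum.inr_injective, Finset.card_univ, Fintype.card_fin]
  have hmem_ustar : ∀ p : I ⊕ Fin d, p ∈ ustar ↔ p.isRight = true := by
    rintro (a | b) <;> simp [ustar]
  -- the map
  let F : {u : Finset I // u.card = k - 1} → Finset {w : Finset (I ⊕ Fin d) // w.card = k - 1} :=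
    fun u => ((u.1.image Sum.inl ∪ ustar).powersetCard (k - 1)).attach.map
      ⟨fun w => ⟨w.1, (Finset.mem_powersetCard.mp w.2).2⟩,
       fun a b h => Subtype.ext (by injection h)⟩
  have hF : ∀ (u : {u : Finset I // u.card = k - 1})
      (w : {w : Finset (I ⊕ Fin d) // w.card = k - 1}),
      w ∈ F u ↔ (w : {w : Finset (I ⊕ Fin d) // w.card = k - 1}).1 ⊆ u.1.image Sum.inl ∪ ustar := by
    intro u w
    constructor
    · intro hw
      simp only [F, Finset.mem_map, Finset.mem_attach, true_and, Function.Embedding.coeFn_mk,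
        Subtype.exists] at hw
      obtain ⟨a, ha, heq⟩ := hw
      obtain ⟨ha1, -⟩ := Finset.mem_powersetCard.mp ha
      rw [← heq]
      exact ha1
    · intro hsub
      simp only [F, Finset.mem_map, Finset.mem_attach, true_and, Function.Embedding.coeFn_mk,
        Subtype.exists]
      exact ⟨w.1, Finset.mem_powersetCard.mpr ⟨hsub, w.2⟩, Subtype.ext rfl⟩
  have hdisj : ∀ u : Finset I, Disjoint (u.image Sum.inl) ustar := by
    intro u
    rw [Finset.disjoint_left]
    rintro p hp hp'
    rw [hmem_ustar] at hp'
    obtain ⟨x, -, rfl⟩ := Finset.mem_image.mp hp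
    simp at hp'
  have hFcard : ∀ u, (F u).card ≤ m := by
    intro u
    rw [Finset.card_map, Finset.card_attach, Finset.card_powersetCard]
    have hb : (u.1.image Sum.inl ∪ ustar).card = k - 1 + d := by
      rw [Finset.card_union_of_disjoint (hdisj u.1),
        Finset.card_image_of_injective _ Sum.inl_injective, u.2, hustar_card]
    rw [hb]
  intro s
  refine ⟨fun u => ⟨F u, hFcard u⟩, ?_⟩
  intro t _
  have key : ∀ G : Finset {w : Finset (I ⊕ Fin d) // w.card = k - 1},
      (∀ w, w ∈ G ↔ ∃ u ∈ t, w ∈ F u) →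
      ((∃ v : Finset I, v.card = n - 1 ∧
        (∀ (u : Finset I) (hu : u.card = k - 1), u ⊆ v →
          (⟨u, hu⟩ : {u : Finset I // u.card = k - 1}) ∈ t) ∧
        (∀ w : Finset I, w ⊆ v → w.card = k → w ∈ S)) ↔
       (∃ v' : Finset (I ⊕ Fin d), v'.card = n' - 1 ∧
        (∀ (u' : Finset (I ⊕ Fin d)) (hu' : u'.card = k - 1), u' ⊆ v' →
          (⟨u', hu'⟩ : {w : Finset (I ⊕ Fin d) // w.card = k - 1}) ∈ G) ∧
        (∀ w' : Finset (I ⊕ Fin d), w' ⊆ v' → w'.card = k → w' ∈ padS k d S))) := by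
    intro G hsup
    constructor
    · -- forward: witness in I gives witness in I ⊕ Fin d
      rintro ⟨v, hvcard, hvA, hvB⟩
      refine ⟨v.image Sum.inl ∪ ustar, ?_, ?_, ?_⟩
      · rw [Finset.card_union_of_disjoint (hdisj v),
          Finset.card_image_of_injective _ Sum.inl_injective, hvcard, hustar_card]
        omega
      · intro u' hu'card hu'sub
        rw [hsup]
        set aI := v.filter (fun x => Sum.inl x ∈ u') with haI
        have haIv : aI ⊆ v := Finset.filter_subset _ _
        have haIcard : aI.card ≤ k - 1 := by
          have h1 : aI.image Sum.inl ⊆ u' := by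
            rintro p hp
            obtain ⟨x, hx, rfl⟩ := Finset.mem_image.mp hp
            exact (Finset.mem_filter.mp hx).2
          calc aI.card = (aI.image Sum.inl).card :=
                (Finset.card_image_of_injective _ Sum.inl_injective).symm
            _ ≤ u'.card := Finset.card_le_card h1
            _ = k - 1 := hu'card
        obtain ⟨u, haIu, huv, hucard⟩ :=
          Finset.exists_subsuperset_card_eq haIv haIcard (by omega)
        refine ⟨⟨u, hucard⟩, hvA u hucard huv, (hF _ _).mpr ?_⟩
        intro p hp
        have := hu'sub hp
        rcases Finset.mem_union.mp this with h | h
        · obtain ⟨x, hx, rfl⟩ := Finset.mem_image.mp h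
          exact Finset.mem_union_left _ (Finset.mem_image_of_mem _
            (haIu (Finset.mem_filter.mpr ⟨hx, hp⟩)))
        · exact Finset.mem_union_right _ h
      · intro w' hw'sub hw'card
        by_cases hr : ∃ p ∈ w', p.isRight = true
        · exact Or.inr ⟨hw'card, hr⟩
        · push_neg at hr
          have hwl : w' ⊆ v.image Sum.inl := by
            intro p hp
            rcases Finset.mem_union.mp (hw'sub hp) with h | h
            · exact h
            · exact absurd ((hmem_ustar p).mp h) (by simpa using hr p hp)
          set w := v.filter (fun x => Sum.inl x ∈ w') with hw
          have heq : w' = w.image Sum.inl := by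
            apply Finset.Subset.antisymm
            · intro p hp
              obtain ⟨x, hx, rfl⟩ := Finset.mem_image.mp (hwl hp)
              exact Finset.mem_image_of_mem _ (Finset.mem_filter.mpr ⟨hx, hp⟩)
            · intro p hp
              obtain ⟨x, hx, rfl⟩ := Finset.mem_image.mp hp
              exact (Finset.mem_filter.mp hx).2
          have hwcard : w.card = k := by
            rw [heq, Finset.card_image_of_injective _ Sum.inl_injective] at hw'card
            exact hw'card
          exact Or.inl ⟨w, hvB w (Finset.filter_subset _ _) hwcard, heq⟩
    · -- backward: witness in I ⊕ Fin d gives witness in I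
      rintro ⟨v', hv'card, hv'A, hv'B⟩
      set vI := v'.preimage Sum.inl Sum.inl_injective.injOn with hvI
      have hmem_vI : ∀ x : I, x ∈ vI ↔ Sum.inl x ∈ v' := fun x => Finset.mem_preimage
      have hcard_vI : n - 1 ≤ vI.card := by
        have himg : vI.image Sum.inl = v'.filter (fun p => p.isLeft = true) := by
          ext p
          constructor
          · intro hp
            obtain ⟨x, hx, rfl⟩ := Finset.mem_image.mp hp
            exact Finset.mem_filter.mpr ⟨(hmem_vI x).mp hx, rfl⟩
          · intro hp
            obtain ⟨hp1, hp2⟩ := Finset.mem_filter.mp hp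
            rcases p with x | b
            · exact Finset.mem_image_of_mem _ ((hmem_vI x).mpr hp1)
            · simp at hp2
        have h1 : (v'.filter (fun p => p.isLeft = true)).card
            + (v'.filter (fun p => ¬ p.isLeft = true)).card = v'.card :=
          Finset.card_filter_add_card_filter_not _
        have h2 : (v'.filter (fun p => ¬ p.isLeft = true)).card ≤ d := by
          calc (v'.filter (fun p => ¬ p.isLeft = true)).card ≤ ustar.card := by
                apply Finset.card_le_card
                intro p hp
                obtain ⟨-, hp2⟩ := Finset.mem_filter.mp hp
                rw [hmem_ustar]
                rcases p with x | b
                · simp at hp2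
                · rfl
            _ = d := hustar_card
        have h3 : vI.card = (v'.filter (fun p => p.isLeft = true)).card := by
          rw [← himg, Finset.card_image_of_injective _ Sum.inl_injective]
        omega
      obtain ⟨v, hvsub, hvcard⟩ := Finset.exists_subset_card_eq hcard_vI
      have hv'mem : ∀ x ∈ v, Sum.inl x ∈ v' := fun x hx => (hmem_vI x).mp (hvsub hx)
      refine ⟨v, hvcard, ?_, ?_⟩
      · intro u hucard husub
        have himgsub : u.image Sum.inl ⊆ v' := by
          intro p hp
          obtain ⟨x, hx, rfl⟩ := Finset.mem_image.mp hp
          exact hv'mem x (husub hx)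
        have himgcard : (u.image (Sum.inl : I → I ⊕ Fin d)).card = k - 1 :=
          (Finset.card_image_of_injective _ Sum.inl_injective).trans hucard
        have hin := hv'A (u.image Sum.inl) himgcard himgsub
        obtain ⟨u₁, hu₁t, hu₁F⟩ := (hsup _).mp hin
        rw [hF] at hu₁F
        have husub1 : u ⊆ u₁.1 := by
          intro x hx
          have := hu₁F (Finset.mem_image_of_mem Sum.inl hx)
          rcases Finset.mem_union.mp this with h | h
          · obtain ⟨y, hy, hyx⟩ := Finset.mem_image.mp h
            rwa [← Sum.inl_injective hyx]
          · rw [hmem_ustar] at h; simp at h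
        have : u = u₁.1 :=
          Finset.eq_of_subset_of_card_le husub1 (by rw [hucard, u₁.2])
        have : (⟨u, hucard⟩ : {u : Finset I // u.card = k - 1}) = u₁ := Subtype.ext this
        rw [this]
        exact hu₁t
      · intro w hwsub hwcard
        have himgsub : w.image Sum.inl ⊆ v' := by
          intro p hp
          obtain ⟨x, hx, rfl⟩ := Finset.mem_image.mp hp
          exact hv'mem x (hwsub hx)
        have himgcard : (w.image (Sum.inl : I → I ⊕ Fin d)).card = k :=
          (Finset.card_image_of_injective _ Sum.inl_injective).trans hwcard
        have hin := hv'B (w.image Sum.inl) himgsub himgcard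
        rcases hin with ⟨w₀, hw₀S, heq⟩ | ⟨-, p, hp, hpr⟩
        · have : w = w₀ := Finset.image_injective Sum.inl_injective heq
          rwa [this]
        · obtain ⟨x, -, rfl⟩ := Finset.mem_image.mp hp
          simp at hpr
  letI : DecidableEq {u : Finset {w : Finset (I ⊕ Fin d) // w.card = k - 1} // u.card ≤ m} :=
    Classical.decEq _
  rw [mem_patternPow_iff]
  simp only [deltaNK, Set.mem_setOf_eq]
  refine not_congr (key _ ?_)
  intro w
  rw [Finset.mem_sup]
  constructor
  · rintro ⟨a, ha, hwa⟩
    obtain ⟨u, hu, rfl⟩ := Finset.mem_image.mp ha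
    exact ⟨u, hu, hwa⟩
  · rintro ⟨u, hu, hwu⟩
    exact ⟨_, Finset.mem_image_of_mem _ hu, hwu⟩

theorem statement7 {I : Type x} (n n' k : ℕ) (h2 : 2 ≤ k) (hkn : k < n) (hnn' : n ≤ n')
    (S : Set (Finset I)) (hS : ∀ v ∈ S, v.card = k) :
    (∀ w ∈ padS k (n' - n) S, w.card = k) ∧
    IsInstanceOf (deltaNK n k S)
      (patternPow (deltaNK n' k (padS k (n' - n) S)) ((k - 1 + (n' - n)).choose (k - 1))) ∧
    ∃ (I' : Type x) (_ : I ↪ I') (S' : Set (Finset I')) (istar : ℕ),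
      (∀ v ∈ S', v.card = k) ∧
      IsInstanceOf (deltaNK n k S) (patternPow (deltaNK n' k S') istar) := by
  refine ⟨padS_card k (n' - n) S hS, main_instance n n' k h2 hkn hnn' S hS,
    I ⊕ Fin (n' - n), ⟨Sum.inl, Sum.inl_injective⟩, padS k (n' - n) S,
    (k - 1 + (n' - n)).choose (k - 1), padS_card k (n' - n) S hS,
    main_instance n n' k h2 hkn hnn' S hS⟩
end

section
/- Suppose 2 ≤ k < n, let J be a countably infinite set, and let R ⊆ [J]^k be a k-uniform hypergraph such that every finite k-uniform hypergraph embeds into (J, R) as an induced subhypergraph (i.e., for every finite k-uniform hypergraph (F, E) there is an injection g : F → J with, for all k-element v ⊆ F, v ∈ E if and only if g[v] ∈ R). Then for every index set I and every S ⊆ [I]^k, the pattern Δ_{n,k}(S) is an instance of Δ_{n,k}(R). -/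
universe x y

theorem statement9 (n k : ℕ) (h2 : 2 ≤ k) (hkn : k < n)
    (J : Type y) [Countable J] [Infinite J] (R : Set (Finset J))
    (hR : ∀ v ∈ R, v.card = k)
    (hrandom : ∀ (m : ℕ) (E : Set (Finset (Fin m))), (∀ v ∈ E, v.card = k) →
      ∃ g : Fin m → J, Function.Injective g ∧
        ∀ v : Finset (Fin m), v.card = k → (v ∈ E ↔ (letI := Classical.decEq J; v.image g) ∈ R))
    (I : Type x) (S : Set (Finset I)) (hS : ∀ v ∈ S, v.card = k) :
    IsInstanceOf (deltaNK n k S) (deltaNK n k R) := by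
  classical
  intro s
  set A : Finset I := s.sup (fun u => u.1) with hA
  have hmemA : ∀ u ∈ s, (u : {u : Finset I // u.card = k-1}).1 ⊆ A := fun u hu => Finset.le_sup hu
  let e : {x // x ∈ A} ≃ Fin A.card := A.equivFin
  let E : Set (Finset (Fin A.card)) :=
    {v | v.card = k ∧ v.image (fun i => ((e.symm i : {x // x ∈ A}) : I)) ∈ S}
  obtain ⟨g₀, hg₀inj, hg₀⟩ := hrandom A.card E (fun v hv => hv.1)
  obtain ⟨j₀⟩ : Nonempty J := inferInstance
  set g : I → J := fun x => if h : x ∈ A then g₀ (e ⟨x, h⟩) else j₀ with hg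
  have hgval : ∀ x (h : x ∈ A), g x = g₀ (e ⟨x, h⟩) := fun x h => dif_pos h
  have hginj : Set.InjOn g (A : Set I) := by
    intro a ha b hb hab
    rw [hgval a ha, hgval b hb] at hab
    have := e.injective (hg₀inj hab)
    exact congrArg Subtype.val this
  have hcardim : ∀ u : Finset I, u ⊆ A → (u.image g).card = u.card := by
    intro u hu
    exact Finset.card_image_of_injOn (hginj.mono (by exact_mod_cast hu))
  have himinj : ∀ u₁ u₂ : Finset I, u₁ ⊆ A → u₂ ⊆ A → u₁.image g = u₂.image g → u₁ = u₂ := by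
    intro u₁ u₂ h1 h2 h
    have : (u₁ : Set I) = u₂ := by
      apply (hginj.image_eq_image_iff (by exact_mod_cast h1) (by exact_mod_cast h2)).mp
      rw [← Finset.coe_image, ← Finset.coe_image, h]
    exact_mod_cast this
  have hSE : ∀ w : Finset I, w ⊆ A → w.card = k → (w ∈ S ↔ w.image g ∈ R) := by
    intro w hw hwk
    set w' : Finset (Fin A.card) := w.attach.image (fun x => e ⟨x.1, hw x.2⟩) with hw'
    have hinj' : Function.Injective (fun x : {a // a ∈ w} => e ⟨x.1, hw x.2⟩) := by
      intro a b hab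
      have := e.injective hab
      have h' : (a : I) = (b : I) := congrArg (fun t : {x // x ∈ A} => (t : I)) this
      exact Subtype.ext h'
    have hw'card : w'.card = k := by
      rw [hw', Finset.card_image_of_injective _ hinj', Finset.card_attach, hwk]
    have him1 : w'.image (fun i => ((e.symm i : {x // x ∈ A}) : I)) = w := by
      rw [hw', Finset.image_image]
      refine (Finset.image_congr (fun x _ => ?_)).trans Finset.attach_image_val
      simp
    have him2 : w'.image g₀ = w.image g := by
      rw [hw', Finset.image_image]
      have hval : ∀ x : {a // a ∈ w}, g₀ (e ⟨x.1, hw x.2⟩) = g x.1 :=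
        fun x => (hgval x.1 (hw x.2)).symm
      calc w.attach.image (fun x => g₀ (e ⟨x.1, hw x.2⟩))
          = w.attach.image (fun x => g x.1) := Finset.image_congr (fun x _ => hval x)
        _ = (w.attach.image Subtype.val).image g := by rw [Finset.image_image]; rfl
        _ = w.image g := by rw [Finset.attach_image_val]
    constructor
    · intro hwS
      have hE : w' ∈ E := ⟨hw'card, by rw [him1]; exact hwS⟩
      have := (hg₀ w' hw'card).mp hE
      rwa [him2] at this
    · intro hwR
      have hE : w' ∈ E := (hg₀ w' hw'card).mpr (by rwa [him2])
      rw [← him1]; exact hE.2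
  obtain ⟨d, hd⟩ := Infinite.exists_subset_card_eq J (k - 1)
  refine ⟨fun u => if h : u.1 ⊆ A then
      ⟨u.1.image g, by rw [hcardim u.1 h]; exact u.2⟩ else ⟨d, hd⟩, ?_⟩
  set f : {u : Finset I // u.card = k-1} → {u : Finset J // u.card = k-1} :=
    fun u => if h : u.1 ⊆ A then ⟨u.1.image g, by rw [hcardim u.1 h]; exact u.2⟩ else ⟨d, hd⟩
    with hf
  have hfval : ∀ (u : {u : Finset I // u.card = k-1}) (h : u.1 ⊆ A),
      (f u).1 = u.1.image g := by
    intro u h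
    rw [hf]; simp only [dif_pos h]
  intro t ht
  have htA : ∀ u ∈ t, (u : {u : Finset I // u.card = k-1}).1 ⊆ A := fun u hu => hmemA u (ht hu)
  have hk1 : 1 ≤ k - 1 := by omega
  have hkn1 : k - 1 ≤ n - 1 := by omega
  have hknn : k ≤ n - 1 := by omega
  simp only [deltaNK, Set.mem_setOf_eq]
  apply not_congr
  constructor
  · rintro ⟨v, hvcard, hv1, hv2⟩
    have hvA : v ⊆ A := by
      intro x hx
      obtain ⟨u, hxu, huv, huc⟩ := Finset.exists_subsuperset_card_eq
        (Finset.singleton_subset_iff.mpr hx) (by simpa using hk1) (by rw [hvcard]; exact hkn1)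
      have := hv1 u huc huv
      exact htA _ this (hxu (Finset.mem_singleton_self x))
    refine ⟨v.image g, by rw [hcardim v hvA, hvcard], ?_, ?_⟩
    · intro u' hu' hu'v
      obtain ⟨u, huv, huim⟩ := Finset.subset_image_iff.mp hu'v
      have huA : u ⊆ A := huv.trans hvA
      have huc : u.card = k - 1 := by rw [← hu', ← huim, hcardim u huA]
      simp only [Finset.mem_image]
      exact ⟨⟨u, huc⟩, hv1 u huc huv,
        Subtype.ext (by rw [hfval ⟨u, huc⟩ huA]; exact huim)⟩
    · intro w' hw'v hw'c
      obtain ⟨w, hwv, hwim⟩ := Finset.subset_image_iff.mp hw'v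
      have hwA : w ⊆ A := hwv.trans hvA
      have hwc : w.card = k := by rw [← hw'c, ← hwim, hcardim w hwA]
      rw [← hwim]
      exact (hSE w hwA hwc).mp (hv2 w hwv hwc)
  · rintro ⟨v', hv'card, hv'1, hv'2⟩
    have hv'A : v' ⊆ A.image g := by
      intro x' hx'
      obtain ⟨u', hxu', hu'v, hu'c⟩ := Finset.exists_subsuperset_card_eq
        (Finset.singleton_subset_iff.mpr hx') (by simpa using hk1) (by rw [hv'card]; exact hkn1)
      have hmem := hv'1 u' hu'c hu'v
      simp only [Finset.mem_image] at hmem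
      obtain ⟨u, hut, hufu⟩ := hmem
      have huA := htA u hut
      have : u' = u.1.image g := by rw [← hfval u huA, hufu]
      have hx'mem : x' ∈ u.1.image g := by rw [← this]; exact hxu' (Finset.mem_singleton_self x')
      exact Finset.image_subset_image huA hx'mem
    obtain ⟨v, hvA, hvim⟩ := Finset.subset_image_iff.mp hv'A
    have hvcard : v.card = n - 1 := by rw [← hv'card, ← hvim, hcardim v hvA]
    refine ⟨v, hvcard, ?_, ?_⟩
    · intro u hu huv
      have huA : u ⊆ A := huv.trans hvA
      have huim : u.image g ⊆ v' := by rw [← hvim]; exact Finset.image_subset_image huv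
      have huimc : (u.image g).card = k - 1 := by rw [hcardim u huA, hu]
      have hmem := hv'1 (u.image g) huimc huim
      simp only [Finset.mem_image] at hmem
      obtain ⟨u₀, hu₀t, hu₀f⟩ := hmem
      have hu₀A := htA u₀ hu₀t
      have heq : u₀.1.image g = u.image g := by rw [← hfval u₀ hu₀A, hu₀f]
      have : u₀.1 = u := himinj u₀.1 u hu₀A huA heq
      have : u₀ = ⟨u, hu⟩ := Subtype.ext this
      rwa [← this]
    · intro w hwv hwc
      have hwA : w ⊆ A := hwv.trans hvA
      have hwim : w.image g ⊆ v' := by rw [← hvim]; exact Finset.image_subset_image hwv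
      have hwimc : (w.image g).card = k := by rw [hcardim w hwA, hwc]
      exact (hSE w hwA hwc).mpr (hv'2 (w.image g) hwim hwimc)
end

section
/- Let B be a complete Boolean algebra, U an ultrafilter on B, n a U-nonstandard name for a natural number, λ an infinite cardinal, and D a multiplicative λ-distribution in U. Then the following are equivalent: (A) for every finite s ⊆ λ, D(s) ≤ ‖n ≥ |s|‖; (B) D is λ-regular, and for every nonzero c ∈ B that decides D({α}) for every α < λ, the set {α < λ : c ≤ D({α})} is finite, and writing m for its cardinality, c ≤ ‖n ≥ m‖. -/
universe u

section BA

variable {B : Type u} [CompleteBooleanAlgebra B]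

/-- U is an ultrafilter on the complete Boolean algebra B. -/
def IsUltra (U : Set B) : Prop :=
  ⊤ ∈ U ∧ ⊥ ∉ U ∧ (∀ a ∈ U, ∀ b : B, a ≤ b → b ∈ U) ∧
    (∀ a ∈ U, ∀ b ∈ U, a ⊓ b ∈ U) ∧ ∀ a : B, a ∈ U ∨ aᶜ ∈ U

/-- c decides b if c ≤ b or c ≤ bᶜ. -/
def Decides (c b : B) : Prop := c ≤ b ∨ c ≤ bᶜ

/-- A λ-distribution (with index set ι of cardinality λ): a map from finite subsets of λ to
the nonzero elements of B, sending ∅ to ⊤ and reversing inclusions. -/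
def IsDistribution {ι : Type*} (A : Finset ι → B) : Prop :=
  (∀ s, A s ≠ ⊥) ∧ A ∅ = ⊤ ∧ ∀ s t : Finset ι, t ⊆ s → A s ≤ A t

/-- A distribution is multiplicative if A(s) = ⨅_{α∈s} A({α}). -/
def IsMultiplicative {ι : Type*} (A : Finset ι → B) : Prop :=
  ∀ s : Finset ι, A s = s.inf (fun α => A {α})

/-- A family (a_α)_{α<λ} is λ-regular: finite subfamilies have nonzero meet, infinite
subfamilies have meet ⊥, and the nonzero elements deciding every a_α are dense in B₊. -/
def IsRegularFamily {ι : Type*} (a : ι → B) : Prop :=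
  (∀ s : Finset ι, s.inf a ≠ ⊥) ∧
  (∀ X : Set ι, X.Infinite → (⨅ α ∈ X, a α) = ⊥) ∧
  (∀ b : B, b ≠ ⊥ → ∃ c : B, c ≠ ⊥ ∧ c ≤ b ∧ ∀ α : ι, Decides c (a α))

/-- A name for a natural number: a map n : ω → B with pairwise disjoint values
whose supremum is ⊤. -/
def IsName (nm : ℕ → B) : Prop :=
  (∀ i j : ℕ, i ≠ j → Disjoint (nm i) (nm j)) ∧ (⨆ m : ℕ, nm m) = ⊤

/-- ‖n ≥ m‖ := ⨆_{j≥m} n(j). -/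
def nameGe (nm : ℕ → B) (m : ℕ) : B := ⨆ j : ℕ, ⨆ _ : m ≤ j, nm j

/-- n is U-nonstandard if ‖n ≥ m‖ ∈ U for every m. -/
def IsNonstandardName (U : Set B) (nm : ℕ → B) : Prop := ∀ m : ℕ, nameGe nm m ∈ U

/-- U is ℵ₁-incomplete: some decreasing ω-sequence from U has infimum ⊥. -/
def Aleph1Incomplete (U : Set B) : Prop :=
  ∃ c : ℕ → B, (∀ k, c k ∈ U) ∧ Antitone c ∧ (⨅ k : ℕ, c k) = ⊥

/-! ### Auxiliary lemmas -/

lemma nameGe_anti (nm : ℕ → B) {m m' : ℕ} (h : m ≤ m') : nameGe nm m' ≤ nameGe nm m :=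
  iSup₂_le fun j hj => le_iSup₂_of_le j (h.trans hj) le_rfl

lemma disjoint_nameGe (nm : ℕ → B)
    (hd : ∀ i j : ℕ, i ≠ j → Disjoint (nm i) (nm j)) (k : ℕ) :
    Disjoint (nm k) (nameGe nm (k + 1)) := by
  simp only [nameGe, disjoint_iSup_iff]
  intro j hj
  exact hd k j (by omega)

lemma eq_bot_of_le_nameGe (nm : ℕ → B)
    (hd : ∀ i j : ℕ, i ≠ j → Disjoint (nm i) (nm j)) (htop : (⨆ m : ℕ, nm m) = ⊤) (b : B)
    (hb : ∀ m, b ≤ nameGe nm m) : b = ⊥ := by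
  have h1 : b ≤ ⨆ k, b ⊓ nm k := by
    rw [← inf_iSup_eq, htop, inf_top_eq]
  have h2 : ∀ k, b ⊓ nm k = ⊥ := fun k =>
    disjoint_iff.mp ((disjoint_nameGe nm hd k).symm.mono_left (hb (k + 1)))
  exact le_bot_iff.mp (h1.trans (iSup_le fun k => (h2 k).le))

lemma exists_inf_nm_ne_bot (nm : ℕ → B) (htop : (⨆ m : ℕ, nm m) = ⊤) (b : B) (hb : b ≠ ⊥) :
    ∃ k, b ⊓ nm k ≠ ⊥ := by
  by_contra h
  push_neg at h
  apply hb
  have h1 : b ≤ ⨆ k, b ⊓ nm k := by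
    rw [← inf_iSup_eq, htop, inf_top_eq]
  exact le_bot_iff.mp (h1.trans (iSup_le fun k => (h k).le))

theorem statement10 {B : Type u} [CompleteBooleanAlgebra B] (U : Set B) (hU : IsUltra U)
    (nm : ℕ → B) (hname : IsName nm) (hns : IsNonstandardName U nm)
    (lam : Cardinal.{u}) (hlam : Cardinal.aleph0 ≤ lam)
    (ι : Type u) (hι : Cardinal.mk ι = lam)
    (D : Finset ι → B) (hD : IsDistribution D) (hDU : ∀ s, D s ∈ U)
    (hmul : IsMultiplicative D) :
    (∀ s : Finset ι, D s ≤ nameGe nm s.card) ↔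
      (IsRegularFamily (fun α : ι => D {α}) ∧
        ∀ c : B, c ≠ ⊥ → (∀ α : ι, Decides c (D {α})) →
          ({α : ι | c ≤ D {α}}.Finite ∧ c ≤ nameGe nm (Nat.card {α : ι | c ≤ D {α}}))) := by
  classical
  obtain ⟨hDne, hDempty, hDmono⟩ := hD
  obtain ⟨hdisj, htop⟩ := hname
  constructor
  · intro hA
    have hinf : ∀ X : Set ι, X.Infinite → (⨅ α ∈ X, D {α}) = ⊥ := by
      intro X hX
      apply eq_bot_of_le_nameGe nm hdisj htop
      intro m
      obtain ⟨s, hsX, hscard⟩ := hX.exists_subset_card_eq m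
      calc (⨅ α ∈ X, D {α}) ≤ s.inf (fun α => D {α}) :=
            Finset.le_inf fun α hα => iInf₂_le α (hsX hα)
        _ = D s := (hmul s).symm
        _ ≤ nameGe nm m := hscard ▸ hA s
    have hfinpart : ∀ c : B, c ≠ ⊥ → (∀ α : ι, Decides c (D {α})) →
        ({α : ι | c ≤ D {α}}.Finite ∧ c ≤ nameGe nm (Nat.card {α : ι | c ≤ D {α}})) := by
      intro c hc hdec
      have hfin : {α : ι | c ≤ D {α}}.Finite := by
        by_contra h
        have h' : {α : ι | c ≤ D {α}}.Infinite := h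
        apply hc
        refine le_bot_iff.mp ?_
        rw [← hinf _ h']
        exact le_iInf₂ fun α hα => hα
      refine ⟨hfin, ?_⟩
      have hcard : Nat.card {α : ι | c ≤ D {α}} = hfin.toFinset.card := by
        rw [Nat.card_coe_set_eq, Set.ncard_eq_toFinset_card _ hfin]
      rw [hcard]
      calc c ≤ hfin.toFinset.inf (fun α => D {α}) :=
            Finset.le_inf fun α hα => hfin.mem_toFinset.mp hα
        _ = D hfin.toFinset := (hmul _).symm
        _ ≤ nameGe nm hfin.toFinset.card := hA _
    refine ⟨⟨?_, hinf, ?_⟩, hfinpart⟩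
    · intro s
      rw [← hmul]
      exact hDne s
    · intro b hb
      obtain ⟨k, hk⟩ := exists_inf_nm_ne_bot nm htop b hb
      set b' := b ⊓ nm k with hb'
      have hbig : ∀ s : Finset ι, k < s.card → b' ⊓ D s = ⊥ := by
        intro s hs
        have h1 : D s ≤ nameGe nm (k + 1) := (hA s).trans (nameGe_anti nm hs)
        have h2 : b' ⊓ D s ≤ nm k ⊓ nameGe nm (k + 1) := inf_le_inf inf_le_right h1
        rw [disjoint_iff.mp (disjoint_nameGe nm hdisj k)] at h2
        exact le_bot_iff.mp h2
      set P : ℕ → Prop := fun n => ∃ s : Finset ι, s.card = n ∧ b' ⊓ D s ≠ ⊥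
      have hP0 : P 0 := ⟨∅, Finset.card_empty, by rwa [hDempty, inf_top_eq]⟩
      have hPle : ∀ n, P n → n ≤ k := by
        rintro n ⟨s, hcard, hne⟩
        by_contra h
        exact hne (hbig s (by omega))
      set n₀ := Nat.findGreatest P k with hn₀
      obtain ⟨s, hscard, hsne⟩ : P n₀ := Nat.findGreatest_spec (Nat.zero_le k) hP0
      have hmax : ∀ n, n₀ < n → ¬ P n := by
        intro n hn hPn
        exact Nat.findGreatest_is_greatest hn (hPle n hPn) hPn
      refine ⟨b' ⊓ D s, hsne, inf_le_left.trans inf_le_left, ?_⟩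
      intro α
      by_cases hα : α ∈ s
      · exact Or.inl (inf_le_right.trans (hDmono s {α} (Finset.singleton_subset_iff.mpr hα)))
      · right
        rw [le_compl_iff_disjoint_right, disjoint_iff]
        have hins : D (insert α s) = D {α} ⊓ D s := by
          rw [hmul (insert α s), Finset.inf_insert, ← hmul s]
        have hb0 : b' ⊓ D (insert α s) = ⊥ := by
          by_contra h
          exact hmax (n₀ + 1) (Nat.lt_succ_self _)
            ⟨insert α s, by rw [Finset.card_insert_of_notMem hα, hscard], h⟩
        rw [hins] at hb0
        calc b' ⊓ D s ⊓ D {α} = b' ⊓ (D {α} ⊓ D s) := by ac_rfl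
          _ = ⊥ := hb0
  · rintro ⟨⟨hne, hinf, hdense⟩, hdec⟩ s
    by_contra h
    have hb : D s ⊓ (nameGe nm s.card)ᶜ ≠ ⊥ := by
      intro h0
      exact h (sdiff_eq_bot_iff.mp (by rwa [sdiff_eq]))
    obtain ⟨c, hc, hcb, hcdec⟩ := hdense _ hb
    obtain ⟨hfin, hle⟩ := hdec c hc hcdec
    have hsub : (↑s : Set ι) ⊆ {α : ι | c ≤ D {α}} := by
      intro α hα
      rcases hcdec α with h1 | h1
      · exact h1
      · exfalso
        apply hc
        have h2 : c ≤ D {α} :=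
          hcb.trans (inf_le_left.trans (hDmono s {α} (Finset.singleton_subset_iff.mpr hα)))
        have h3 : c ≤ D {α} ⊓ (D {α})ᶜ := le_inf h2 h1
        rwa [inf_compl_eq_bot, le_bot_iff] at h3
    have hcard : s.card ≤ Nat.card {α : ι | c ≤ D {α}} := by
      rw [Nat.card_coe_set_eq]
      calc s.card = (↑s : Set ι).ncard := (Set.ncard_coe_finset s).symm
        _ ≤ _ := Set.ncard_le_ncard hsub hfin
    have h1 : c ≤ nameGe nm s.card := hle.trans (nameGe_anti nm hcard)
    have h2 : c ≤ (nameGe nm s.card)ᶜ := hcb.trans inf_le_right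
    have h3 : c ≤ nameGe nm s.card ⊓ (nameGe nm s.card)ᶜ := le_inf h1 h2
    rw [inf_compl_eq_bot, le_bot_iff] at h3
    exact hc h3

end BA
end

section
/- Let B be a complete Boolean algebra, U an ultrafilter on B, and λ an infinite cardinal. If U is λ-flexible, then U is λ-regular, i.e. U contains a λ-regular family. -/
universe u

section BA

variable {B : Type u} [CompleteBooleanAlgebra B]

variable {B : Type u} [CompleteBooleanAlgebra B]

/-- U is λ-flexible (with index set ι of cardinality λ): U is ℵ₁-incomplete and for every
U-nonstandard name n there is a multiplicative λ-distribution D in U with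
D(s) ≤ ‖n ≥ |s|‖ for every finite s. -/
def IsFlexible (U : Set B) (ι : Type*) : Prop :=
  Aleph1Incomplete U ∧
    ∀ nm : ℕ → B, IsName nm → IsNonstandardName U nm →
      ∃ D : Finset ι → B, IsDistribution D ∧ (∀ s, D s ∈ U) ∧ IsMultiplicative D ∧
        ∀ s : Finset ι, D s ≤ nameGe nm s.card


section Aux

variable {B : Type u} [CompleteBooleanAlgebra B]

lemma nameGe_antitone (nm : ℕ → B) : Antitone (nameGe nm) := by
  intro m m' h
  refine iSup₂_le fun j hj => ?_
  exact le_iSup₂ (f := fun j (_ : m ≤ j) => nm j) j (h.trans hj)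

lemma nm_inf_nameGe (nm : ℕ → B) (h : ∀ i j : ℕ, i ≠ j → Disjoint (nm i) (nm j))
    (i m : ℕ) (him : i < m) : nm i ⊓ nameGe nm m = ⊥ := by
  rw [nameGe, inf_iSup_eq]
  refine le_bot_iff.mp (iSup_le fun j => ?_)
  rw [inf_iSup_eq]
  refine iSup_le fun hj => ?_
  exact (h i j (by omega)).le_bot

lemma iInf_nameGe_bot (nm : ℕ → B) (h : IsName nm) : (⨅ m, nameGe nm m) = ⊥ := by
  set y := ⨅ m, nameGe nm m with hy
  have hyi : ∀ i, y ⊓ nm i = ⊥ := by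
    intro i
    have h1 : y ≤ nameGe nm (i+1) := iInf_le _ _
    have h2 : nm i ⊓ nameGe nm (i+1) = ⊥ := nm_inf_nameGe nm h.1 i (i+1) (by omega)
    refine le_bot_iff.mp ?_
    calc y ⊓ nm i ≤ nameGe nm (i+1) ⊓ nm i := inf_le_inf_right _ h1
    _ ≤ ⊥ := by rw [inf_comm]; exact h2.le
  have : y = y ⊓ ⨆ m, nm m := by rw [h.2, inf_top_eq]
  rw [this, inf_iSup_eq]
  exact le_bot_iff.mp (iSup_le fun i => (hyi i).le)

end Aux

theorem statement11 {B : Type u} [CompleteBooleanAlgebra B] (U : Set B) (hU : IsUltra U)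
    (lam : Cardinal.{u}) (hlam : Cardinal.aleph0 ≤ lam)
    (ι : Type u) (hι : Cardinal.mk ι = lam)
    (hflex : IsFlexible U ι) :
    ∃ a : ι → B, (∀ α : ι, a α ∈ U) ∧ IsRegularFamily a := by
  classical
  obtain ⟨hflex1, hflex2⟩ := hflex
  obtain ⟨c, hcU, hcmono, hcbot⟩ := hflex1
  obtain ⟨hUtop, hUbot, hUup, hUinf, hUultra⟩ := hU
  -- the auxiliary antitone sequence d with d 0 = ⊤
  set d : ℕ → B := fun k => Nat.rec ⊤ (fun k _ => c k) k with hd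
  have hd0 : d 0 = ⊤ := rfl
  have hdsucc : ∀ k, d (k+1) = c k := fun k => rfl
  have hdanti : Antitone d := by
    refine antitone_nat_of_succ_le fun k => ?_
    cases k with
    | zero => exact le_top
    | succ k => exact hcmono (Nat.le_succ k)
  have hdU : ∀ k, d k ∈ U := by
    intro k; cases k with
    | zero => exact hUtop
    | succ k => exact hcU k
  have hdbot : (⨅ k, d k) = ⊥ := by
    refine le_bot_iff.mp ?_
    rw [← hcbot]
    exact le_iInf fun k => iInf_le d (k+1)
  -- the name
  set nm : ℕ → B := fun m => d m \ d (m+1) with hnm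
  have hnmle : ∀ m, nm m ≤ d m := fun m => sdiff_le
  have hnmcompl : ∀ m, (nm m)ᶜ = (d m)ᶜ ⊔ d (m+1) := by
    intro m
    rw [hnm]; simp [sdiff_eq, compl_inf]
  have hdisj : ∀ i j : ℕ, i ≠ j → Disjoint (nm i) (nm j) := by
    have key : ∀ i j : ℕ, i < j → Disjoint (nm i) (nm j) := by
      intro i j hij
      have h1 : nm i ≤ (d (i+1))ᶜ := by
        rw [hnm]; simp [sdiff_eq]
      have h2 : nm j ≤ d (i+1) := (hnmle j).trans (hdanti hij)
      exact disjoint_compl_left.mono h1 h2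
    intro i j hij
    rcases Nat.lt_or_ge i j with h | h
    · exact key i j h
    · exact (key j i (by omega)).symm
  have hname : IsName nm := by
    constructor
    · exact hdisj
    · set z := (⨆ m, nm m)ᶜ with hz
      have hzd : ∀ k, z ≤ d k := by
        intro k
        induction k with
        | zero => exact le_top
        | succ k ih =>
          have h1 : z ≤ (nm k)ᶜ := by
            rw [hz]
            exact compl_le_compl (le_iSup nm k)
          rw [hnmcompl k] at h1
          have : z ≤ d k ⊓ ((d k)ᶜ ⊔ d (k+1)) := le_inf ih h1
          calc z ≤ d k ⊓ ((d k)ᶜ ⊔ d (k+1)) := this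
          _ = (d k ⊓ (d k)ᶜ) ⊔ (d k ⊓ d (k+1)) := inf_sup_left _ _ _
          _ ≤ d (k+1) := by simp
      have hzbot : z = ⊥ := le_bot_iff.mp (by rw [← hdbot]; exact le_iInf hzd)
      have := congrArg compl hzbot
      rwa [hz, compl_compl, compl_bot] at this
  have hdle : ∀ m, d m ≤ nameGe nm m := by
    intro m
    rw [← sdiff_eq_bot_iff, sdiff_eq]
    set x := d m ⊓ (nameGe nm m)ᶜ with hx
    have hxk : ∀ k, x ≤ d (m + k) := by
      intro k
      induction k with
      | zero => exact inf_le_left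
      | succ k ih =>
        have h1 : x ≤ (nm (m+k))ᶜ := by
          have : nm (m+k) ≤ nameGe nm m :=
            le_iSup₂ (f := fun j (_ : m ≤ j) => nm j) (m+k) (Nat.le_add_right m k)
          exact inf_le_right.trans (compl_le_compl this)
        rw [hnmcompl] at h1
        have h2 : x ≤ d (m+k) ⊓ ((d (m+k))ᶜ ⊔ d (m+k+1)) := le_inf ih h1
        calc x ≤ d (m+k) ⊓ ((d (m+k))ᶜ ⊔ d (m+k+1)) := h2
        _ = (d (m+k) ⊓ (d (m+k))ᶜ) ⊔ (d (m+k) ⊓ d (m+k+1)) := inf_sup_left _ _ _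
        _ ≤ d (m + (k+1)) := by simp [← add_assoc]
    refine le_bot_iff.mp ?_
    rw [← hdbot]
    refine le_iInf fun k => ?_
    exact (hxk k).trans (hdanti (Nat.le_add_left k m))
  have hnonstd : IsNonstandardName U nm := fun m => hUup _ (hdU m) _ (hdle m)
  obtain ⟨D, ⟨hDne, hDempty, hDmono⟩, hDU, hDmult, hDge⟩ := hflex2 nm hname hnonstd
  refine ⟨fun α => D {α}, fun α => hDU _, ?_, ?_, ?_⟩
  · intro s
    rw [← hDmult s]
    exact hDne s
  · intro X hX
    refine le_bot_iff.mp ?_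
    rw [← iInf_nameGe_bot nm hname]
    refine le_iInf fun m => ?_
    obtain ⟨s, hsX, hscard⟩ := hX.exists_subset_card_eq m
    have h1 : (⨅ α ∈ X, D {α}) ≤ s.inf fun α => D {α} := by
      refine Finset.le_inf fun α hα => ?_
      exact iInf₂_le α (hsX hα)
    rw [← hDmult s] at h1
    exact h1.trans (by rw [← hscard]; exact hDge s)
  · intro b hb
    -- find j with b ⊓ nm j ≠ ⊥
    have hbj : ∃ j, b ⊓ nm j ≠ ⊥ := by
      by_contra hcon
      push_neg at hcon
      apply hb
      have : b = b ⊓ ⨆ m, nm m := by rw [hname.2, inf_top_eq]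
      rw [this, inf_iSup_eq]
      exact le_bot_iff.mp (iSup_le fun j => (hcon j).le)
    obtain ⟨j, hj⟩ := hbj
    set c0 := b ⊓ nm j with hc0
    have hc0b : c0 ≤ b := inf_le_left
    -- big finite sets kill c0
    have hbig : ∀ s : Finset ι, j < s.card → c0 ⊓ s.inf (fun α => D {α}) = ⊥ := by
      intro s hs
      have h1 : s.inf (fun α => D {α}) ≤ nameGe nm (j+1) := by
        rw [← hDmult s]
        exact (hDge s).trans (nameGe_antitone nm hs)
      have h2 : c0 ≤ nm j := inf_le_right
      refine le_bot_iff.mp ?_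
      calc c0 ⊓ s.inf (fun α => D {α}) ≤ nm j ⊓ nameGe nm (j+1) :=
        inf_le_inf h2 h1
      _ ≤ ⊥ := (nm_inf_nameGe nm hdisj j (j+1) (by omega)).le
    set P : ℕ → Prop := fun n => ∃ s : Finset ι, s.card = n ∧ c0 ⊓ s.inf (fun α => D {α}) ≠ ⊥
      with hP
    have hP0 : P 0 := ⟨∅, by simp, by simpa using hj⟩
    have hPbd : ∀ n, P n → n ≤ j := by
      intro n ⟨s, hsc, hsne⟩
      by_contra hn
      exact hsne (hbig s (by omega))
    set N := Nat.findGreatest P j with hN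
    have hPN : P N := Nat.findGreatest_spec (Nat.zero_le j) hP0
    have hNmax : ∀ n, P n → n ≤ N := by
      intro n hn
      exact Nat.le_findGreatest (hPbd n hn) hn
    obtain ⟨s, hscard, hsne⟩ := hPN
    refine ⟨c0 ⊓ s.inf (fun α => D {α}), hsne, inf_le_left.trans hc0b, fun α => ?_⟩
    by_cases hα : α ∈ s
    · exact Or.inl (inf_le_right.trans (Finset.inf_le hα))
    · refine Or.inr ?_
      rw [le_compl_iff_disjoint_right, disjoint_iff]
      by_contra hne
      have hins : P (N + 1) := by
        refine ⟨insert α s, ?_, ?_⟩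
        · rw [Finset.card_insert_of_notMem hα, hscard]
        · rw [Finset.inf_insert]
          intro hzero
          apply hne
          rw [← hzero]
          rw [inf_comm (D {α}) _]
          rw [← inf_assoc]
      have := hNmax _ hins
      omega


end BA
end

section
/- Let B be a complete Boolean algebra, U an ℵ₁-incomplete ultrafilter on B, and λ an infinite cardinal. Then U is λ-OK if and only if U is λ-flexible. -/
universe u

section BA

variable {B : Type u} [CompleteBooleanAlgebra B]

variable {B : Type u} [CompleteBooleanAlgebra B]

/-- U is λ-OK (with index set ι of cardinality λ): every λ-distribution in U whose value
depends only on the cardinality of the input has a multiplicative refinement which is a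
λ-distribution in U. -/
def IsOK (U : Set B) (ι : Type*) : Prop :=
  ∀ A : Finset ι → B, IsDistribution A → (∀ s, A s ∈ U) →
    (∀ s t : Finset ι, s.card = t.card → A s = A t) →
    ∃ D : Finset ι → B, IsDistribution D ∧ (∀ s, D s ∈ U) ∧ IsMultiplicative D ∧
      ∀ s : Finset ι, D s ≤ A s

private lemma nameGe_antitone' {B : Type u} [CompleteBooleanAlgebra B] (nm : ℕ → B)
    {m m' : ℕ} (h : m ≤ m') : nameGe nm m' ≤ nameGe nm m := by
  refine iSup₂_le fun j hj => ?_
  exact le_iSup_of_le j (le_iSup_of_le (h.trans hj) le_rfl)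

private lemma le_nameGe' {B : Type u} [CompleteBooleanAlgebra B] (nm : ℕ → B)
    {m j : ℕ} (h : m ≤ j) : nm j ≤ nameGe nm m :=
  le_iSup_of_le j (le_iSup_of_le h le_rfl)

private lemma nameGe_le' {B : Type u} [CompleteBooleanAlgebra B] (nm : ℕ → B)
    {m : ℕ} {b : B} (h : ∀ j, m ≤ j → nm j ≤ b) : nameGe nm m ≤ b :=
  iSup₂_le h

private lemma tele' {B : Type u} [CompleteBooleanAlgebra B] (h : ℕ → B)
    (hh : ∀ i j, i ≤ j → h j ≤ h i) (m : ℕ) :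
    ∀ k, h m ⊓ (h k)ᶜ ≤ nameGe (fun j => h j ⊓ (h (j+1))ᶜ) m := by
  intro k
  induction k with
  | zero =>
    calc h m ⊓ (h 0)ᶜ ≤ h 0 ⊓ (h 0)ᶜ := inf_le_inf_right _ (hh 0 m (Nat.zero_le m))
    _ = ⊥ := inf_compl_eq_bot
    _ ≤ _ := bot_le
  | succ k ih =>
    rcases le_or_gt (k+1) m with hk | hk
    · calc h m ⊓ (h (k+1))ᶜ ≤ h (k+1) ⊓ (h (k+1))ᶜ := inf_le_inf_right _ (hh _ _ hk)
      _ = ⊥ := inf_compl_eq_bot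
      _ ≤ _ := bot_le
    · have hmk : m ≤ k := Nat.lt_succ_iff.mp hk
      have e : h m ⊓ (h (k+1))ᶜ
          = (h m ⊓ (h (k+1))ᶜ ⊓ (h k)ᶜ) ⊔ (h m ⊓ (h (k+1))ᶜ ⊓ h k) := by
        rw [← inf_sup_left, compl_sup_eq_top, inf_top_eq]
      calc h m ⊓ (h (k+1))ᶜ
          = (h m ⊓ (h (k+1))ᶜ ⊓ (h k)ᶜ) ⊔ (h m ⊓ (h (k+1))ᶜ ⊓ h k) := e
        _ ≤ (h m ⊓ (h k)ᶜ) ⊔ (h k ⊓ (h (k+1))ᶜ) :=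
            sup_le_sup (inf_le_inf_right _ inf_le_left)
              (le_inf inf_le_right (inf_le_left.trans inf_le_right))
        _ ≤ nameGe (fun j => h j ⊓ (h (j+1))ᶜ) m :=
            sup_le ih (le_nameGe' (fun j => h j ⊓ (h (j+1))ᶜ) hmk)

private lemma le_nameGe_of_inf_bot {B : Type u} [CompleteBooleanAlgebra B] (h : ℕ → B)
    (hh : ∀ i j, i ≤ j → h j ≤ h i) (hbot : (⨅ k : ℕ, h k) = ⊥) (m : ℕ) :
    h m ≤ nameGe (fun j => h j ⊓ (h (j+1))ᶜ) m := by
  have : h m = ⨆ k : ℕ, h m ⊓ (h k)ᶜ := by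
    rw [← inf_iSup_eq, ← compl_iInf, hbot, compl_bot, inf_top_eq]
  rw [this]
  exact iSup_le fun k => tele' h hh m k

theorem statement12 {B : Type u} [CompleteBooleanAlgebra B] (U : Set B) (hU : IsUltra U)
    (hinc : Aleph1Incomplete U)
    (lam : Cardinal.{u}) (hlam : Cardinal.aleph0 ≤ lam)
    (ι : Type u) (hι : Cardinal.mk ι = lam) :
    IsOK U ι ↔ IsFlexible U ι := by
  obtain ⟨htop, hbotU, hup, hinf, _⟩ := hU
  have hιinf : Infinite ι := by
    rw [Cardinal.infinite_iff, hι]; exact hlam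
  constructor
  · -- OK → flexible
    intro hOK
    refine ⟨hinc, fun nm hnm hns => ?_⟩
    set A : Finset ι → B := fun s => nameGe nm s.card with hA
    have hAU : ∀ s, A s ∈ U := fun s => hns s.card
    have hAdist : IsDistribution A := by
      refine ⟨fun s hbot => hbotU (hbot ▸ hAU s), ?_, fun s t hts => ?_⟩
      · show nameGe nm (∅ : Finset ι).card = ⊤
        rw [Finset.card_empty]
        refine le_antisymm le_top ?_
        rw [← hnm.2]
        exact iSup_le fun j => le_nameGe' nm (Nat.zero_le j)
      · exact nameGe_antitone' nm (Finset.card_le_card hts)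
    obtain ⟨D, hD1, hD2, hD3, hD4⟩ := hOK A hAdist hAU
      (fun s t hc => by simp only [hA, hc])
    exact ⟨D, hD1, hD2, hD3, hD4⟩
  · -- flexible → OK
    intro hflex A hAdist hAU hAcard
    obtain ⟨c, hcU, hcanti, hcbot⟩ := hinc
    -- sets of each cardinality
    have hsk : ∀ k : ℕ, ∃ s : Finset ι, s.card = k := fun k => Finset.exists_card_eq k
    choose sk hsk using hsk
    set f : ℕ → B := fun k => A (sk k) with hf
    have hfanti : ∀ i j : ℕ, i ≤ j → f j ≤ f i := by
      intro i j hij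
      obtain ⟨t, hts, htc⟩ := Finset.exists_subset_card_eq (by rw [hsk j]; exact hij :
        i ≤ (sk j).card)
      calc f j ≤ A t := hAdist.2.2 _ _ hts
        _ = f i := hAcard _ _ (by rw [htc, hsk i])
    -- the antitone sequence h with h 0 = ⊤
    set h : ℕ → B := fun k => Nat.rec ⊤ (fun n _ => f (n+1) ⊓ c (n+1)) k with hhdef
    have h0 : h 0 = ⊤ := rfl
    have hsucc : ∀ k, h (k+1) = f (k+1) ⊓ c (k+1) := fun k => rfl
    have hhanti : ∀ i j : ℕ, i ≤ j → h j ≤ h i := by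
      intro i j hij
      cases i with
      | zero => exact le_top.trans_eq h0.symm
      | succ i =>
        cases j with
        | zero => omega
        | succ j =>
          rw [hsucc, hsucc]
          exact inf_le_inf (hfanti _ _ (by omega)) (hcanti (by omega))
    have hhU : ∀ k, h k ∈ U := by
      intro k
      cases k with
      | zero => exact h0 ▸ htop
      | succ k => exact hsucc k ▸ hinf _ (hAU _) _ (hcU _)
    have hhbot : (⨅ k : ℕ, h k) = ⊥ := by
      refine le_antisymm ?_ bot_le
      refine le_trans ?_ hcbot.le
      refine le_iInf fun k => ?_
      exact (iInf_le _ (k+1)).trans (((hsucc k).le.trans inf_le_right).trans (hcanti (Nat.le_succ k)))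
    set nm : ℕ → B := fun j => h j ⊓ (h (j+1))ᶜ with hnmdef
    have hnmle : ∀ j, nm j ≤ h j := fun j => inf_le_left
    have hname : IsName nm := by
      constructor
      · intro i j hij
        rcases hij.lt_or_gt with hlt | hlt
        · have h1 : nm i ≤ (h (i+1))ᶜ := inf_le_right
          have h2 : nm j ≤ h (i+1) := (hnmle j).trans (hhanti _ _ hlt)
          exact (disjoint_compl_left (a := h (i+1))).mono h1 h2
        · have h1 : nm j ≤ (h (j+1))ᶜ := inf_le_right
          have h2 : nm i ≤ h (j+1) := (hnmle i).trans (hhanti _ _ hlt)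
          exact ((disjoint_compl_left (a := h (j+1))).mono h1 h2).symm
      · refine le_antisymm le_top ?_
        have := le_nameGe_of_inf_bot h hhanti hhbot 0
        rw [h0] at this
        refine this.trans ?_
        exact nameGe_le' _ fun j _ => le_iSup nm j
    have hnonstd : IsNonstandardName U nm := fun m =>
      hup _ (hhU m) _ (le_nameGe_of_inf_bot h hhanti hhbot m)
    obtain ⟨D, hD1, hD2, hD3, hD4⟩ := hflex.2 nm hname hnonstd
    refine ⟨D, hD1, hD2, hD3, fun s => ?_⟩
    have hge : nameGe nm s.card ≤ h s.card :=
      nameGe_le' _ fun j hj => (hnmle j).trans (hhanti _ _ hj)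
    refine (hD4 s).trans (hge.trans ?_)
    cases hc : s.card with
    | zero =>
      have : s = ∅ := Finset.card_eq_zero.mp hc
      rw [this, hAdist.2.1, h0]
    | succ k =>
      rw [hsucc]
      refine inf_le_left.trans ?_
      exact (hAcard (sk (k+1)) s (by rw [hsk, hc])).le

end BA
end

section
/- Let B be a complete Boolean algebra, let U be a nonprincipal ultrafilter on B, write λ = c.c.(B), and let σ be the least cardinal such that there is a decreasing sequence (a_α)_{α<σ} of elements of U with ⨅_{α<σ} a_α = ⊥. Then σ < λ, and there is a maximal antichain (c_γ)_{γ<σ} of B (pairwise disjoint nonzero elements with ⨆_{γ<σ} c_γ = ⊤) of cardinality σ such that for every X ⊆ σ with |X| < σ, ⨆_{γ∈X} c_γ ∉ U. -/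
universe u

section BA

variable {B : Type u} [CompleteBooleanAlgebra B]

/-- An antichain in B: a set of pairwise-disjoint nonzero elements. -/
def IsAntichainIn {B : Type*} [CompleteBooleanAlgebra B] (A : Set B) : Prop :=
  (∀ a ∈ A, a ≠ ⊥) ∧ A.Pairwise (fun a b => a ⊓ b = ⊥)

/-- c.c.(B): the least cardinal κ such that B has no antichain of cardinality κ. -/
noncomputable def ccOf (B : Type u) [CompleteBooleanAlgebra B] : Cardinal.{u} :=
  sInf {κ : Cardinal.{u} | ¬ ∃ A : Set B, IsAntichainIn A ∧ Cardinal.mk A = κ}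

/-- A is a (λ, Δ)-distribution: for every finite s ⊆ λ and nonzero c deciding A(t) for all
t ⊆ s, there is f : s → I with, for all t ⊆ s, c ≤ A(t) iff f[t] ∈ Δ. -/
def IsDeltaDistribution {B : Type*} [CompleteBooleanAlgebra B] {ι : Type*} {I : Type*}
    (A : Finset ι → B) (Δ : Set (Finset I)) : Prop :=
  ∀ (s : Finset ι) (c : B), c ≠ ⊥ → (∀ t ⊆ s, Decides c (A t)) →
    ∃ f : ι → I, ∀ t ⊆ s, (c ≤ A t ↔ (letI := Classical.decEq I; t.image f) ∈ Δ)

/-- A complete embedding of complete Boolean algebras: an injective homomorphism preserving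
arbitrary suprema and infima. -/
def IsCompleteEmbedding {B : Type*} {B' : Type*} [CompleteBooleanAlgebra B]
    [CompleteBooleanAlgebra B'] (e : B → B') : Prop :=
  Function.Injective e ∧ (∀ a b : B, e (a ⊓ b) = e a ⊓ e b) ∧
    (∀ a b : B, e (a ⊔ b) = e a ⊔ e b) ∧ (∀ a : B, e aᶜ = (e a)ᶜ) ∧
    (∀ S : Set B, e (sSup S) = sSup (e '' S)) ∧ (∀ S : Set B, e (sInf S) = sInf (e '' S))

/-- The set of cardinals κ such that some decreasing κ-sequence from U has infimum ⊥;
its least element is the completeness of U. -/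
def complSpec {B : Type u} [CompleteBooleanAlgebra B] (U : Set B) : Set Cardinal.{u} :=
  {κ : Cardinal.{u} | ∃ a : κ.ord.ToType → B,
    (∀ α, a α ∈ U) ∧ Antitone a ∧ (⨅ α, a α) = ⊥}

namespace Statement14Aux

variable {B : Type u} [CompleteBooleanAlgebra B] {U : Set B}

lemma top_ne_bot' (hU : IsUltra U) : (⊤ : B) ≠ ⊥ := fun h => hU.2.1 (h ▸ hU.1)

lemma compl_mem' (hU : IsUltra U) {a : B} (h : a ∉ U) : aᶜ ∈ U :=
  (hU.2.2.2.2 a).resolve_left h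

lemma mem_ne_bot (hU : IsUltra U) {a : B} (h : a ∈ U) : a ≠ ⊥ := fun e => hU.2.1 (e ▸ h)

lemma lemA (hU : IsUltra U) (o : Ordinal.{u}) (g : Ordinal.{u} → B)
    (hmem : ∀ α < o, g α ∈ U) (hmono : ∀ α β : Ordinal.{u}, α ≤ β → β < o → g β ≤ g α)
    (hinf : (⨅ β : Set.Iio o, g β.1) = ⊥) :
    Order.IsSuccLimit o ∧ ∃ κ, κ ∈ complSpec U ∧ κ ≤ o.cof := by
  rcases Ordinal.zero_or_succ_or_isSuccLimit o with h0 | ⟨p, hp⟩ | hlim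
  · exfalso
    subst h0
    haveI : IsEmpty (Set.Iio (0 : Ordinal.{u})) := ⟨fun x => not_lt_zero (a := x.1) x.2⟩
    rw [iInf_of_empty] at hinf
    exact top_ne_bot' hU hinf
  · exfalso
    subst hp
    have hinf' : (⨅ β : Set.Iio (Order.succ p), g β.1) = g p :=
      le_antisymm (iInf_le _ (⟨p, Order.lt_succ p⟩ : Set.Iio (Order.succ p)))
        (le_iInf fun β => hmono β.1 p (Order.lt_succ_iff.mp β.2) (Order.lt_succ p))
    exact mem_ne_bot hU (hmem p (Order.lt_succ p)) (hinf'.symm.trans hinf)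
  · refine ⟨hlim, ?_⟩
    obtain ⟨f, hf⟩ := Ordinal.exists_fundamental_sequence o
    let iso := (Ordinal.ToType.mk (o := o.cof.ord))
    let F : Set.Iio o.cof.ord → B := fun j => g (f j.1 j.2)
    refine ⟨o.cof, ⟨fun x => F (iso.symm x), fun x => hmem _ (hf.lt _), fun x y hxy => ?_, ?_⟩,
      le_rfl⟩
    · exact hmono _ _ (hf.monotone _ _ (iso.symm.monotone hxy)) (hf.lt _)
    · apply le_bot_iff.mp
      rw [← hinf]
      refine le_iInf fun β => ?_
      have hβ : β.1 < Ordinal.blsub o.cof.ord f := by rw [hf.blsub_eq]; exact β.2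
      obtain ⟨i, hi, hle⟩ := Ordinal.lt_blsub_iff.mp hβ
      refine iInf_le_of_le (iso ⟨i, hi⟩) ?_
      have heq : iso.symm (iso ⟨i, hi⟩) = ⟨i, hi⟩ := iso.symm_apply_apply _
      calc F (iso.symm (iso ⟨i, hi⟩)) = F ⟨i, hi⟩ := by rw [heq]
        _ ≤ g β.1 := hmono _ _ hle (hf.lt _)

lemma specNonempty (hU : IsUltra U) (hnp : sInf U = ⊥) : (complSpec U).Nonempty := by
  classical
  set μ := Cardinal.mk (↑U) with hμ
  have hcard : Cardinal.mk (μ.ord.ToType) = Cardinal.mk (↑U) := by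
    rw [Cardinal.mk_toType, Cardinal.card_ord]
  obtain ⟨e⟩ := Cardinal.eq.mp hcard
  set iso := (Ordinal.ToType.mk (o := μ.ord)) with hiso
  set u : Ordinal.{u} → B := fun β => if h : β < μ.ord then (e (iso ⟨β, h⟩) : B) else ⊤ with hu
  have huval : ∀ (β : Ordinal.{u}) (h : β < μ.ord), u β = (e (iso ⟨β, h⟩) : B) := by
    intro β h
    simp only [hu]
    exact dif_pos h
  have humem : ∀ β, β < μ.ord → u β ∈ U := by
    intro β h
    rw [huval β h]
    exact (e (iso ⟨β, h⟩)).2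
  have husurj : ∀ b ∈ U, ∃ β, β < μ.ord ∧ u β = b := by
    intro b hb
    refine ⟨(iso.symm (e.symm ⟨b, hb⟩)).1, (iso.symm (e.symm ⟨b, hb⟩)).2, ?_⟩
    rw [huval _ (iso.symm (e.symm ⟨b, hb⟩)).2]
    have h1 : (⟨(iso.symm (e.symm ⟨b, hb⟩)).1, (iso.symm (e.symm ⟨b, hb⟩)).2⟩ :
        Set.Iio μ.ord) = iso.symm (e.symm ⟨b, hb⟩) := rfl
    rw [h1, iso.apply_symm_apply, e.apply_symm_apply]
  set G : Ordinal.{u} → B := fun α => ⨅ β : Set.Iio α, u β.1 with hG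
  have hGmono : ∀ α α' : Ordinal, α ≤ α' → G α' ≤ G α := fun α α' h =>
    le_iInf fun β => iInf_le _ (⟨β.1, lt_of_lt_of_le β.2 h⟩ : Set.Iio α')
  have hGμ : G μ.ord = ⊥ := by
    rw [← hnp]
    apply le_antisymm
    · refine le_sInf fun b hb => ?_
      obtain ⟨β, hβ, hβ'⟩ := husurj b hb
      exact hβ' ▸ iInf_le _ (⟨β, hβ⟩ : Set.Iio μ.ord)
    · exact le_iInf fun β => sInf_le (humem β.1 β.2)
  have hSne : {α : Ordinal.{u} | G α ∉ U}.Nonempty :=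
    ⟨μ.ord, by simp only [Set.mem_setOf_eq, hGμ]; exact hU.2.1⟩
  set θ := sInf {α : Ordinal.{u} | G α ∉ U} with hθ
  have hθS : G θ ∉ U := csInf_mem hSne
  have hθle : θ ≤ μ.ord := csInf_le' (by simp only [Set.mem_setOf_eq, hGμ]; exact hU.2.1)
  have hlt : ∀ α, α < θ → G α ∈ U := fun α h => by
    by_contra hn
    exact absurd (csInf_le' (show α ∈ {α : Ordinal.{u} | G α ∉ U} from hn)) (not_le.mpr h)
  have hθ0 : θ ≠ 0 := by
    intro h
    apply hθS
    rw [h]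
    haveI : IsEmpty (Set.Iio (0 : Ordinal.{u})) := ⟨fun x => not_lt_zero (a := x.1) x.2⟩
    have h2 : G 0 = ⊤ := iInf_of_empty _
    rw [h2]; exact hU.1
  have hθsucc : ∀ p, θ ≠ Order.succ p := by
    intro p hp
    have hpθ : p < θ := hp ▸ Order.lt_succ p
    have hpμ : p < μ.ord := lt_of_lt_of_le hpθ hθle
    have hGsucc : G θ = G p ⊓ u p := by
      rw [hp]
      apply le_antisymm
      · exact le_inf (hGmono _ _ (Order.le_succ p)) (iInf_le _ (⟨p, Order.lt_succ p⟩ : Set.Iio (Order.succ p)))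
      · refine le_iInf fun β => ?_
        rcases lt_or_eq_of_le (Order.lt_succ_iff.mp (show (β : Ordinal) < Order.succ p from β.2)) with h | h
        · exact inf_le_left.trans (iInf_le _ (⟨β.1, h⟩ : Set.Iio p))
        · rw [show (β : Ordinal) = p from h]; exact inf_le_right
    exact hθS (hGsucc ▸ hU.2.2.2.1 _ (hlt p hpθ) _ (humem p hpμ))
  have hθlim : Order.IsSuccLimit θ := by
    rcases Ordinal.zero_or_succ_or_isSuccLimit θ with h | ⟨p, hp⟩ | h
    · exact absurd h hθ0
    · exact absurd hp.symm (hθsucc p)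
    · exact h
  have hGθ : (⨅ α : Set.Iio θ, G α.1) = G θ := by
    apply le_antisymm
    · refine le_iInf fun β => ?_
      exact (iInf_le _ (⟨Order.succ β.1, hθlim.succ_lt β.2⟩ : Set.Iio θ)).trans
        (iInf_le _ (⟨β.1, Order.lt_succ β.1⟩ : Set.Iio (Order.succ β.1)))
    · exact le_iInf fun α => hGmono _ _ α.2.le
  haveI : Nonempty (Set.Iio θ) := ⟨⟨0, hθlim.pos⟩⟩
  obtain ⟨-, κ, hκ, -⟩ := lemA hU θ (fun α => G α ⊓ (G θ)ᶜ)
    (fun α hα => hU.2.2.2.1 _ (hlt α hα) _ (compl_mem' hU hθS))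
    (fun α β h _ => inf_le_inf (hGmono _ _ h) le_rfl)
    (by show (⨅ β : Set.Iio θ, (G β.1 ⊓ (G θ)ᶜ)) = ⊥
        rw [← iInf_inf, hGθ, inf_compl_eq_bot])
  exact ⟨κ, hκ⟩

noncomputable def Eseq (g : Ordinal.{u} → B) : Ordinal.{u} → B :=
  Ordinal.lt_wf.fix fun α ih =>
    g (sInf {γ | ¬ (⨅ β : Set.Iio α, ih β.1 β.2) ≤ g γ}) ⊓ ⨅ β : Set.Iio α, ih β.1 β.2

noncomputable def Dseq (g : Ordinal.{u} → B) (α : Ordinal.{u}) : B :=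
  ⨅ β : Set.Iio α, Eseq g β.1

noncomputable def Gam (g : Ordinal.{u} → B) (α : Ordinal.{u}) : Ordinal.{u} :=
  sInf {γ | ¬ Dseq g α ≤ g γ}

lemma Eseq_def (g : Ordinal.{u} → B) (α : Ordinal.{u}) :
    Eseq g α = g (Gam g α) ⊓ Dseq g α := by
  unfold Eseq
  rw [WellFounded.fix_eq]
  rfl

end Statement14Aux

set_option maxHeartbeats 2000000 in
open Statement14Aux in
theorem statement14 {B : Type u} [CompleteBooleanAlgebra B]
    (U : Set B) (hU : IsUltra U) (hnp : sInf U = ⊥)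
    (lam : Cardinal.{u}) (hlam : lam = ccOf B)
    (σ : Cardinal.{u}) (hσ : σ = sInf (complSpec U)) :
    σ < lam ∧
    ∃ c : σ.ord.ToType → B,
      Function.Injective c ∧ (∀ γ, c γ ≠ ⊥) ∧
      (∀ γ γ', γ ≠ γ' → c γ ⊓ c γ' = ⊥) ∧ (⨆ γ, c γ) = ⊤ ∧
      ∀ X : Set σ.ord.ToType, Cardinal.mk X < σ → (⨆ γ ∈ X, c γ) ∉ U := by
  classical
  have hσmem : σ ∈ complSpec U := by
    rw [hσ]; exact csInf_mem (specNonempty hU hnp)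
  obtain ⟨a, hamem, hamono, hainf⟩ := hσmem
  set iso := (Ordinal.ToType.mk (o := σ.ord)) with hisodef
  set g : Ordinal.{u} → B := fun α => if h : α < σ.ord then a (iso ⟨α, h⟩) else ⊥ with hg
  have hgval' : ∀ (β : Ordinal.{u}) (h : β < σ.ord), g β = a (iso ⟨β, h⟩) := by
    intro β h
    simp only [hg]
    exact dif_pos h
  have hgmem : ∀ α, α < σ.ord → g α ∈ U := fun α h => by
    rw [hgval' α h]; exact hamem _
  have hgmono : ∀ α β : Ordinal, α ≤ β → g β ≤ g α := by
    intro α β h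
    by_cases hβ : β < σ.ord
    · have hα : α < σ.ord := lt_of_le_of_lt h hβ
      rw [hgval' β hβ, hgval' α hα]
      exact hamono (iso.monotone (Subtype.mk_le_mk.mpr h))
    · have hb : g β = ⊥ := by simp only [hg]; exact dif_neg hβ
      rw [hb]; exact bot_le
  have hgval : ∀ x : σ.ord.ToType, g ((iso.symm x : Set.Iio σ.ord) : Ordinal) = a x := by
    intro x
    rw [hgval' _ (iso.symm x).2,
      show (⟨((iso.symm x : Set.Iio σ.ord) : Ordinal), (iso.symm x).2⟩ : Set.Iio σ.ord) =
        iso.symm x from rfl, iso.apply_symm_apply]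
  have hginf : (⨅ β : Set.Iio σ.ord, g β.1) = ⊥ := by
    rw [← hainf]
    apply le_antisymm
    · exact le_iInf fun x => (iInf_le _ (iso.symm x)).trans (le_of_eq (hgval x))
    · refine le_iInf fun β => iInf_le_of_le (iso β) (le_of_eq ?_)
      rw [← hgval (iso β), iso.symm_apply_apply]
  obtain ⟨hσlim, κ₀, hκ₀, hκ₀cof⟩ := lemA hU σ.ord g hgmem (fun α β h _ => hgmono α β h) hginf
  have hσcof : σ.ord.cof = σ := by
    refine le_antisymm ((Ordinal.cof_le_card _).trans_eq (Cardinal.card_ord σ)) ?_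
    have h1 : σ ≤ κ₀ := by rw [hσ]; exact csInf_le' hκ₀
    exact h1.trans hκ₀cof
  -- chain σ-completeness of U
  have hB : ∀ o : Ordinal.{u}, o.card < σ → ∀ f : Ordinal.{u} → B, (∀ α, α < o → f α ∈ U) →
      (∀ α β : Ordinal, α ≤ β → β < o → f β ≤ f α) → (⨅ β : Set.Iio o, f β.1) ∈ U := by
    intro o ho f hfm hfmono
    by_contra hn
    have h0 : o ≠ 0 := by
      intro h
      subst h
      haveI : IsEmpty (Set.Iio (0 : Ordinal.{u})) := ⟨fun x => not_lt_zero (a := x.1) x.2⟩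
      rw [iInf_of_empty] at hn
      exact hn hU.1
    haveI : Nonempty (Set.Iio o) := ⟨⟨0, pos_iff_ne_zero.2 h0⟩⟩
    obtain ⟨-, κ, hκ, hκc⟩ := lemA hU o (fun α => f α ⊓ (⨅ β : Set.Iio o, f β.1)ᶜ)
      (fun α hα => hU.2.2.2.1 _ (hfm α hα) _ (compl_mem' hU hn))
      (fun α β h hβ => inf_le_inf (hfmono α β h hβ) le_rfl)
      (by show (⨅ β : Set.Iio o, (f β.1 ⊓ (⨅ β : Set.Iio o, f β.1)ᶜ)) = ⊥
          rw [← iInf_inf, inf_compl_eq_bot])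
    have h1 : σ ≤ κ := by rw [hσ]; exact csInf_le' hκ
    exact absurd (h1.trans (hκc.trans (Ordinal.cof_le_card o))) (not_le.mpr ho)
  have hdense : ∀ d : B, d ∈ U → ∃ γ, γ < σ.ord ∧ ¬ d ≤ g γ := by
    intro d hd
    by_contra hcon
    push_neg at hcon
    apply mem_ne_bot hU hd
    apply le_bot_iff.mp
    rw [← hginf]
    exact le_iInf fun β => hcon β.1 β.2
  have hDmono : ∀ β α : Ordinal, β ≤ α → Dseq g α ≤ Dseq g β := by
    intro β α h
    show (⨅ x : Set.Iio α, Eseq g x.1) ≤ ⨅ x : Set.Iio β, Eseq g x.1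
    exact le_iInf fun x => iInf_le (fun y : Set.Iio α => Eseq g y.1) ⟨x.1, lt_of_lt_of_le x.2 h⟩
  have hDE : ∀ β α : Ordinal, β < α → Dseq g α ≤ Eseq g β := by
    intro β α h
    show (⨅ x : Set.Iio α, Eseq g x.1) ≤ Eseq g β
    exact iInf_le (fun y : Set.Iio α => Eseq g y.1) ⟨β, h⟩
  have hED : ∀ α, Eseq g α ≤ Dseq g α := fun α => by
    rw [Eseq_def]; exact inf_le_right
  have key : ∀ α, α < σ.ord → Dseq g α ∈ U ∧ Eseq g α ∈ U := by
    intro α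
    induction α using Ordinal.induction with
    | h α IH =>
    intro hα
    have hD : Dseq g α ∈ U := by
      apply hB α (Cardinal.lt_ord.mp hα) (Eseq g)
      · exact fun β hβ => (IH β hβ (hβ.trans hα)).2
      · intro β β' h hβ'
        rcases lt_or_eq_of_le h with h' | h'
        · exact (hED β').trans (hDE β β' h')
        · rw [h']
    obtain ⟨γ₀, hγ₀lt, hγ₀⟩ := hdense _ hD
    have hΓlt : Gam g α < σ.ord := lt_of_le_of_lt (csInf_le' hγ₀) hγ₀lt
    have hE : Eseq g α ∈ U := by
      rw [Eseq_def]
      exact hU.2.2.2.1 _ (hgmem _ hΓlt) _ hD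
    exact ⟨hD, hE⟩
  have hGam_spec : ∀ α, α < σ.ord → (¬ Dseq g α ≤ g (Gam g α)) ∧ Gam g α < σ.ord := by
    intro α hα
    obtain ⟨γ₀, hγ₀lt, hγ₀⟩ := hdense _ (key α hα).1
    constructor
    · have h1 : sInf {γ : Ordinal.{u} | ¬ Dseq g α ≤ g γ} ∈
          {γ : Ordinal.{u} | ¬ Dseq g α ≤ g γ} :=
        csInf_mem ⟨γ₀, hγ₀⟩
      exact h1
    · exact lt_of_le_of_lt (csInf_le' hγ₀) hγ₀lt
  have hEltD : ∀ α, α < σ.ord → Eseq g α < Dseq g α := by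
    intro α hα
    refine lt_of_le_of_ne (hED α) fun h => (hGam_spec α hα).1 ?_
    rw [← h, Eseq_def]
    exact inf_le_left
  have hGamlt : ∀ β α, β < α → α < σ.ord → Gam g β < Gam g α := by
    intro β α hβα hα
    have h1 : ∀ γ, γ ≤ Gam g β → Dseq g α ≤ g γ := by
      intro γ hγ
      rcases lt_or_eq_of_le hγ with h | h
      · have hnotin : γ ∉ {γ | ¬ Dseq g β ≤ g γ} := fun hmem =>
          absurd (csInf_le' hmem) (not_le.mpr h)
        exact (hDmono β α hβα.le).trans (not_not.mp hnotin)
      · have h2 : Dseq g α ≤ g (Gam g β) :=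
          (hDE β α hβα).trans ((le_of_eq (Eseq_def g β)).trans inf_le_left)
        rw [h]; exact h2
    by_contra hc
    push_neg at hc
    exact (hGam_spec α hα).1 (h1 _ hc)
  have hGamge : ∀ α, α < σ.ord → α ≤ Gam g α := by
    intro α
    induction α using Ordinal.induction with
    | h α IH =>
    intro hα
    by_contra hc
    push_neg at hc
    have h1 := IH (Gam g α) hc ((hGam_spec α hα).2)
    have h2 := hGamlt (Gam g α) α hc hα
    exact absurd (h1.trans_lt h2) (lt_irrefl _)
  have hEinf : (⨅ β : Set.Iio σ.ord, Eseq g β.1) = ⊥ := by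
    apply le_bot_iff.mp
    rw [← hginf]
    refine le_iInf fun β => iInf_le_of_le β ?_
    calc Eseq g β.1 ≤ g (Gam g β.1) := (le_of_eq (Eseq_def g β.1)).trans inf_le_left
      _ ≤ g β.1 := hgmono _ _ (hGamge β.1 β.2)
  -- the antichain, at the level of ordinals
  set F : Set.Iio σ.ord → B := fun β => Dseq g β.1 ⊓ (Eseq g β.1)ᶜ with hF
  have hCne : ∀ β : Set.Iio σ.ord, F β ≠ ⊥ := by
    intro β h
    rw [hF] at h
    simp only at h
    rw [← sdiff_eq] at h
    exact absurd (sdiff_eq_bot_iff.mp h) (hEltD β.1 β.2).not_ge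
  have hCdisj : ∀ β β' : Set.Iio σ.ord, β.1 < β'.1 → F β' ⊓ F β = ⊥ := by
    intro β β' h
    apply le_bot_iff.mp
    calc F β' ⊓ F β ≤ Eseq g β.1 ⊓ (Eseq g β.1)ᶜ :=
          inf_le_inf (inf_le_left.trans (hDE β.1 β'.1 h)) inf_le_right
      _ = ⊥ := inf_compl_eq_bot
  have hCinj : Function.Injective F := by
    intro β β' h
    by_contra hne
    rcases lt_trichotomy β.1 β'.1 with hlt | heq | hlt
    · have h2 := hCdisj β β' hlt
      rw [← h, inf_idem] at h2
      exact hCne β h2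
    · exact hne (Subtype.ext heq)
    · have h2 := hCdisj β' β hlt
      rw [h, inf_idem] at h2
      exact hCne β' h2
  have hCtop : (⨆ β : Set.Iio σ.ord, F β) = ⊤ := by
    have hz : ∀ α, α < σ.ord → (⨅ β : Set.Iio σ.ord, (F β)ᶜ) ≤ Eseq g α := by
      intro α
      induction α using Ordinal.induction with
      | h α IH =>
      intro hα
      have h1 : (⨅ β : Set.Iio σ.ord, (F β)ᶜ) ≤ Dseq g α :=
        le_iInf fun x => IH x.1 x.2 (x.2.trans hα)
      have h2 : (⨅ β : Set.Iio σ.ord, (F β)ᶜ) ≤ (Dseq g α)ᶜ ⊔ Eseq g α := by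
        refine (iInf_le _ (⟨α, hα⟩ : Set.Iio σ.ord)).trans (le_of_eq ?_)
        rw [hF]
        simp only
        rw [compl_inf, compl_compl]
      calc (⨅ β : Set.Iio σ.ord, (F β)ᶜ) ≤ Dseq g α ⊓ ((Dseq g α)ᶜ ⊔ Eseq g α) := le_inf h1 h2
        _ ≤ Eseq g α := by
          rw [inf_sup_left, inf_compl_eq_bot, bot_sup_eq]
          exact inf_le_right
    have hzbot : (⨅ β : Set.Iio σ.ord, (F β)ᶜ) = ⊥ := by
      apply le_bot_iff.mp
      rw [← hEinf]
      exact le_iInf fun β => hz β.1 β.2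
    have h3 : (⨆ β : Set.Iio σ.ord, F β)ᶜ = ⊥ := by rw [compl_iSup]; exact hzbot
    exact compl_eq_bot.mp h3
  have hCbound : ∀ (δ : Ordinal) (β : Set.Iio σ.ord), β.1 < δ → F β ≤ (Dseq g δ)ᶜ := by
    intro δ β h
    rw [le_compl_iff_disjoint_right, disjoint_iff]
    apply le_bot_iff.mp
    calc F β ⊓ Dseq g δ ≤ (Eseq g β.1)ᶜ ⊓ Eseq g β.1 :=
          inf_le_inf inf_le_right (hDE β.1 δ h)
      _ = ⊥ := by rw [inf_comm, inf_compl_eq_bot]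
  -- size of the antichain and σ < λ
  have hAcard : Cardinal.mk (Set.range (fun x => F (iso.symm x))) = σ := by
    rw [Cardinal.mk_range_eq (fun x => F (iso.symm x)) (hCinj.comp iso.symm.injective),
      Cardinal.mk_toType, Cardinal.card_ord]
  have hanti : IsAntichainIn (Set.range (fun x => F (iso.symm x))) := by
    constructor
    · rintro x ⟨β, rfl⟩; exact hCne (iso.symm β)
    · rintro x ⟨β, rfl⟩ y ⟨β', rfl⟩ hne
      rcases lt_trichotomy (iso.symm β).1 (iso.symm β').1 with hlt | heq | hlt
      · rw [inf_comm]; exact hCdisj _ _ hlt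
      · exact absurd (congrArg F (Subtype.ext heq)) hne
      · exact hCdisj _ _ hlt
  have hσlam : σ < ccOf B := by
    by_contra hcon
    push_neg at hcon
    have hSne2 : {κ : Cardinal.{u} |
        ¬ ∃ A : Set B, IsAntichainIn A ∧ Cardinal.mk A = κ}.Nonempty := by
      refine ⟨Order.succ (Cardinal.mk B), ?_⟩
      rintro ⟨A, hA, hAc⟩
      exact absurd hAc (ne_of_lt ((Cardinal.mk_set_le A).trans_lt (Order.lt_succ _)))
    have hmem2 : ccOf B ∈ {κ : Cardinal.{u} |
        ¬ ∃ A : Set B, IsAntichainIn A ∧ Cardinal.mk A = κ} := csInf_mem hSne2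
    obtain ⟨A', hsub, hA'c⟩ := Cardinal.le_mk_iff_exists_subset.mp (hcon.trans_eq hAcard.symm)
    exact hmem2 ⟨A', ⟨fun x hx => hanti.1 x (hsub hx), hanti.2.mono hsub⟩, hA'c⟩
  refine ⟨by rw [hlam]; exact hσlam, fun x => F (iso.symm x), ?_, ?_, ?_, ?_, ?_⟩
  · -- injective
    intro x y h
    have h' : F (iso.symm x) = F (iso.symm y) := h
    exact iso.symm.injective (hCinj h')
  · -- nonzero
    intro γ
    exact hCne (iso.symm γ)
  · -- pairwise disjoint
    intro γ γ' hne
    have hne' : iso.symm γ ≠ iso.symm γ' := fun h => hne (iso.symm.injective h)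
    show F (iso.symm γ) ⊓ F (iso.symm γ') = ⊥
    rcases lt_trichotomy (iso.symm γ).1 (iso.symm γ').1 with hlt | heq | hlt
    · rw [inf_comm]; exact hCdisj _ _ hlt
    · exact absurd (Subtype.ext heq) hne'
    · exact hCdisj _ _ hlt
  · -- supremum is ⊤
    show (⨆ x, F (iso.symm x)) = ⊤
    rw [iso.symm.surjective.iSup_comp]
    exact hCtop
  · -- small unions are not in U
    intro X hX hmemU
    set f : X → Ordinal.{u} := fun x => ((iso.symm x.1 : Set.Iio σ.ord) : Ordinal) with hf
    have hfb : ∀ x, f x < σ.ord := fun x => (iso.symm x.1).2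
    have hXcard : Cardinal.mk X < σ.ord.cof := by rw [hσcof]; exact hX
    have hδ : iSup f < σ.ord := Ordinal.iSup_lt_ord hXcard hfb
    have hδ1 : Order.succ (iSup f) < σ.ord := hσlim.succ_lt hδ
    have hDmem : Dseq g (Order.succ (iSup f)) ∈ U := (key _ hδ1).1
    have hle : (⨆ γ ∈ X, F (iso.symm γ)) ≤ (Dseq g (Order.succ (iSup f)))ᶜ := by
      refine iSup₂_le fun γ hγ => ?_
      refine hCbound _ (iso.symm γ) ?_
      exact Order.lt_succ_iff.mpr (Ordinal.le_iSup f ⟨γ, hγ⟩)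
    have h1 : (Dseq g (Order.succ (iSup f)))ᶜ ∈ U := hU.2.2.1 _ hmemU _ hle
    have h2 := hU.2.2.2.1 _ hDmem _ h1
    rw [inf_compl_eq_bot] at h2
    exact hU.2.1 h2

end BA
end
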